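/- arXiv:2207.03275 — 4 statements merged into one kernel-verified Lean document; each statement's English description precedes it below -/
import Mathlib

section
/- Compression preserves connectivity: if a shape S is connected, then the column compression K_C(S), the row compression K_R(S), and the baseline B(S) are connected shapes. -/
/-- Minimum first coordinate of a shape (0 for the empty set). -/
def xmin (S : Finset (ℤ × ℤ)) : ℤ := WithTop.untopD 0 ((S.image Prod.fst).min)

/-- Minimum second coordinate of a shape (0 for the empty set). -/
def ymin (S : Finset (ℤ × ℤ)) : ℤ := WithTop.untopD 0 ((S.image Prod.snd).min)

/-- East full doubling. -/
def DE (S : Finset (ℤ × ℤ)) : Finset (ℤ × ℤ) :=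
  S.image (fun p => (2 * p.1 - xmin S, p.2)) ∪
    S.image (fun p => (2 * p.1 - xmin S + 1, p.2))

/-- North full doubling. -/
def DN (S : Finset (ℤ × ℤ)) : Finset (ℤ × ℤ) :=
  S.image (fun p => (p.1, 2 * p.2 - ymin S)) ∪
    S.image (fun p => (p.1, 2 * p.2 - ymin S + 1))

/-- Apply a sequence of full doubling operations (`true` = east, `false` = north),
in order (head of the list first). -/
def applySeq (σ : List Bool) (S : Finset (ℤ × ℤ)) : Finset (ℤ × ℤ) :=
  σ.foldl (fun T b => if b then DE T else DN T) S

/-- The (p,q)-rectangle around an integer point. -/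
noncomputable def Rec2 (u : ℤ × ℤ) (p q : ℕ) : Finset (ℤ × ℤ) :=
  Finset.Icc u.1 (u.1 + (p : ℤ) - 1) ×ˢ Finset.Icc u.2 (u.2 + (q : ℤ) - 1)

/-- The reconfiguration function `F_{l,k}`. -/
noncomputable def F (l k : ℕ) (S : Finset (ℤ × ℤ)) : Finset (ℤ × ℤ) :=
  S.biUnion fun p =>
    Rec2 (p.1 + ((2 : ℤ) ^ l - 1) * (p.1 - xmin S),
          p.2 + ((2 : ℤ) ^ k - 1) * (p.2 - ymin S)) (2 ^ l) (2 ^ k)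

/-- Two grid points are adjacent if they are at orthogonal distance 1. -/
def Adj (u v : ℤ × ℤ) : Prop := (u.1 - v.1).natAbs + (u.2 - v.2).natAbs = 1

/-- A shape is connected if any two of its points are joined by a path of
adjacent points inside the shape. -/
def ShapeConnected (S : Finset (ℤ × ℤ)) : Prop :=
  ∀ u ∈ S, ∀ v ∈ S,
    Relation.ReflTransGen (fun a b => a ∈ S ∧ b ∈ S ∧ Adj a b) u v

/-- `wD D x` is the number of elements of `D` strictly west of `x`. -/
def wD (D : Finset ℤ) (x : ℤ) : ℕ := (D.filter (· < x)).card

/-- East RC doubling of `S` with doubled column set `D`. -/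
def RCE (S : Finset (ℤ × ℤ)) (D : Finset ℤ) : Finset (ℤ × ℤ) :=
  S.image (fun p => (p.1 + (wD D p.1 : ℤ), p.2)) ∪
    (S.filter fun p => p.1 ∈ D).image fun p => (p.1 + (wD D p.1 : ℤ) + 1, p.2)

/-- North RC doubling of `S` with doubled row set `D`. -/
def RCN (S : Finset (ℤ × ℤ)) (D : Finset ℤ) : Finset (ℤ × ℤ) :=
  S.image (fun p => (p.1, p.2 + (wD D p.2 : ℤ))) ∪
    (S.filter fun p => p.2 ∈ D).image fun p => (p.1, p.2 + (wD D p.2 : ℤ) + 1)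

/-- `D` is an admissible doubled column set for `S`. -/
def eastAdmissible (S : Finset (ℤ × ℤ)) (D : Finset ℤ) : Prop :=
  D.Nonempty ∧ ∀ d ∈ D, ∃ y, (d, y) ∈ S

/-- `D` is an admissible doubled row set for `S`. -/
def northAdmissible (S : Finset (ℤ × ℤ)) (D : Finset ℤ) : Prop :=
  D.Nonempty ∧ ∀ d ∈ D, ∃ x, (x, d) ∈ S

/-- One east or north RC doubling step. -/
def RCStep (S T : Finset (ℤ × ℤ)) : Prop :=
  ∃ D : Finset ℤ,
    (eastAdmissible S D ∧ T = RCE S D) ∨ (northAdmissible S D ∧ T = RCN S D)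

/-- One single column or single row doubling step (an RC step with `|D| = 1`). -/
def SingleStep (S T : Finset (ℤ × ℤ)) : Prop :=
  ∃ D : Finset ℤ, D.card = 1 ∧
    ((eastAdmissible S D ∧ T = RCE S D) ∨ (northAdmissible S D ∧ T = RCN S D))

/-- Translate a shape by a vector. -/
def translateSh (v : ℤ × ℤ) (S : Finset (ℤ × ℤ)) : Finset (ℤ × ℤ) :=
  S.image fun p => (p.1 + v.1, p.2 + v.2)

/-- Single east column doubling at column `d`. -/
def oE (d : ℤ) (T : Finset (ℤ × ℤ)) : Finset (ℤ × ℤ) :=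
  (T.filter fun p => p.1 ≤ d) ∪ (T.filter fun p => d ≤ p.1).image fun p => (p.1 + 1, p.2)

/-- The column of `S` at `x`. -/
def colS (S : Finset (ℤ × ℤ)) (x : ℤ) : Finset ℤ := (S.filter fun p => p.1 = x).image Prod.snd

/-- The row of `S` at `y`. -/
def rowS (S : Finset (ℤ × ℤ)) (y : ℤ) : Finset ℤ := (S.filter fun p => p.2 = y).image Prod.fst

/-- `phiC S x` counts the column changes of `S` in the interval `(xmin S, x]`. -/
noncomputable def phiC (S : Finset (ℤ × ℤ)) (x : ℤ) : ℕ :=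
  ((Finset.Icc (xmin S + 1) x).filter fun x' => colS S x' ≠ colS S (x' - 1)).card

/-- `phiR S y` counts the row changes of `S` in the interval `(ymin S, y]`. -/
noncomputable def phiR (S : Finset (ℤ × ℤ)) (y : ℤ) : ℕ :=
  ((Finset.Icc (ymin S + 1) y).filter fun y' => rowS S y' ≠ rowS S (y' - 1)).card

/-- Column compression of a shape. -/
noncomputable def KC (S : Finset (ℤ × ℤ)) : Finset (ℤ × ℤ) := S.image fun p => ((phiC S p.1 : ℤ), p.2)

/-- Row compression of a shape. -/
noncomputable def KR (S : Finset (ℤ × ℤ)) : Finset (ℤ × ℤ) := S.image fun p => (p.1, (phiR S p.2 : ℤ))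

/-- The baseline shape of `S`. -/
noncomputable def Baseline (S : Finset (ℤ × ℤ)) : Finset (ℤ × ℤ) := KR (KC S)

/-- Number of distinct consecutive columns of `S`. -/
noncomputable def mC (S : Finset (ℤ × ℤ)) : ℕ := (S.image Prod.fst).sup (phiC S) + 1

/-- Number of distinct consecutive rows of `S`. -/
noncomputable def mR (S : Finset (ℤ × ℤ)) : ℕ := (S.image Prod.snd).sup (phiR S) + 1

/-- Consecutive multiplicity of the `i`-th distinct column of `S`. -/
noncomputable def MC (S : Finset (ℤ × ℤ)) (i : ℕ) : ℕ := ((S.image Prod.fst).filter fun x => phiC S x = i).card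

/-- Consecutive multiplicity of the `i`-th distinct row of `S`. -/
noncomputable def MR (S : Finset (ℤ × ℤ)) (i : ℕ) : ℕ := ((S.image Prod.snd).filter fun y => phiR S y = i).card

/-- The four unit directions. -/
def dirs : Finset (ℤ × ℤ) := {(1, 0), (-1, 0), (0, 1), (0, -1)}

/-- One node-addition growth step: a direction `d` is fixed and every new node is
generated at a position `p + d` for an existing node `p`. -/
def AddStep (S T : Finset (ℤ × ℤ)) : Prop :=
  ∃ d ∈ dirs, S ⊆ T ∧ T ⊆ S ∪ S.image (fun p => (p.1 + d.1, p.2 + d.2))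


section Aux

private lemma phiC_succ_cases (S : Finset (ℤ × ℤ)) (x : ℤ) :
    phiC S (x + 1) = phiC S x ∨ phiC S (x + 1) = phiC S x + 1 := by
  unfold phiC
  set m := xmin S + 1 with hm
  have hsub1 : (Finset.Icc m x).filter (fun x' => colS S x' ≠ colS S (x' - 1)) ⊆
      (Finset.Icc m (x+1)).filter (fun x' => colS S x' ≠ colS S (x' - 1)) :=
    Finset.filter_subset_filter _ (Finset.Icc_subset_Icc_right (by omega))
  have hsub2 : (Finset.Icc m (x+1)).filter (fun x' => colS S x' ≠ colS S (x' - 1)) ⊆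
      insert (x+1) ((Finset.Icc m x).filter (fun x' => colS S x' ≠ colS S (x' - 1))) := by
    intro a ha
    rw [Finset.mem_filter, Finset.mem_Icc] at ha
    by_cases h : a = x + 1
    · simp [h]
    · rw [Finset.mem_insert, Finset.mem_filter, Finset.mem_Icc]
      right; exact ⟨⟨ha.1.1, by omega⟩, ha.2⟩
  have h1 := Finset.card_le_card hsub1
  have h2 := Finset.card_le_card hsub2
  have h3 := Finset.card_insert_le (x+1)
    ((Finset.Icc m x).filter (fun x' => colS S x' ≠ colS S (x' - 1)))
  omega

private lemma phiR_succ_cases (S : Finset (ℤ × ℤ)) (y : ℤ) :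
    phiR S (y + 1) = phiR S y ∨ phiR S (y + 1) = phiR S y + 1 := by
  unfold phiR
  set m := ymin S + 1 with hm
  have hsub1 : (Finset.Icc m y).filter (fun y' => rowS S y' ≠ rowS S (y' - 1)) ⊆
      (Finset.Icc m (y+1)).filter (fun y' => rowS S y' ≠ rowS S (y' - 1)) :=
    Finset.filter_subset_filter _ (Finset.Icc_subset_Icc_right (by omega))
  have hsub2 : (Finset.Icc m (y+1)).filter (fun y' => rowS S y' ≠ rowS S (y' - 1)) ⊆
      insert (y+1) ((Finset.Icc m y).filter (fun y' => rowS S y' ≠ rowS S (y' - 1))) := by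
    intro a ha
    rw [Finset.mem_filter, Finset.mem_Icc] at ha
    by_cases h : a = y + 1
    · simp [h]
    · rw [Finset.mem_insert, Finset.mem_filter, Finset.mem_Icc]
      right; exact ⟨⟨ha.1.1, by omega⟩, ha.2⟩
  have h1 := Finset.card_le_card hsub1
  have h2 := Finset.card_le_card hsub2
  have h3 := Finset.card_insert_le (y+1)
    ((Finset.Icc m y).filter (fun y' => rowS S y' ≠ rowS S (y' - 1)))
  omega

/-- If a map sends adjacent points of `S` to equal or adjacent points,
then the image of a connected shape is connected. -/
private lemma connected_image (S : Finset (ℤ × ℤ)) (f : ℤ × ℤ → ℤ × ℤ)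
    (hf : ∀ a ∈ S, ∀ b ∈ S, Adj a b → f a = f b ∨ Adj (f a) (f b))
    (hconn : ShapeConnected S) : ShapeConnected (S.image f) := by
  have key : ∀ a b : ℤ × ℤ,
      Relation.ReflTransGen (fun u v => u ∈ S ∧ v ∈ S ∧ Adj u v) a b →
      Relation.ReflTransGen
        (fun u v => u ∈ S.image f ∧ v ∈ S.image f ∧ Adj u v) (f a) (f b) := by
    intro a b h
    induction h with
    | refl => exact Relation.ReflTransGen.refl
    | tail _ hbc ih =>
      rcases hbc with ⟨hb, hc, hadj⟩
      rcases hf _ hb _ hc hadj with heq | hadj'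
      · rwa [← heq]
      · exact ih.tail ⟨Finset.mem_image_of_mem f hb, Finset.mem_image_of_mem f hc, hadj'⟩
  intro u hu v hv
  rcases Finset.mem_image.mp hu with ⟨a, ha, rfl⟩
  rcases Finset.mem_image.mp hv with ⟨b, hb, rfl⟩
  exact key a b (hconn a ha b hb)

private lemma adj_KC (S : Finset (ℤ × ℤ)) :
    ∀ a ∈ S, ∀ b ∈ S, Adj a b →
      ((phiC S a.1 : ℤ), a.2) = ((phiC S b.1 : ℤ), b.2) ∨
      Adj ((phiC S a.1 : ℤ), a.2) ((phiC S b.1 : ℤ), b.2) := by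
  intro a _ b _ hadj
  unfold Adj at hadj ⊢
  simp only at *
  rcases (by omega : (a.1 = b.1 ∧ (a.2 - b.2).natAbs = 1) ∨
      ((a.1 - b.1).natAbs = 1 ∧ a.2 = b.2)) with ⟨h1, h2⟩ | ⟨h1, h2⟩
  · right; rw [h1]; simpa using h2
  · rcases (by omega : a.1 = b.1 + 1 ∨ b.1 = a.1 + 1) with h | h
    · rcases phiC_succ_cases S b.1 with hc | hc <;> rw [h, hc]
      · left; rw [h2]
      · right; simp [h2]
    · rcases phiC_succ_cases S a.1 with hc | hc <;> rw [h, hc]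
      · left; rw [h2]
      · right; simp [h2]

private lemma adj_KR (S : Finset (ℤ × ℤ)) :
    ∀ a ∈ S, ∀ b ∈ S, Adj a b →
      (a.1, (phiR S a.2 : ℤ)) = (b.1, (phiR S b.2 : ℤ)) ∨
      Adj (a.1, (phiR S a.2 : ℤ)) (b.1, (phiR S b.2 : ℤ)) := by
  intro a _ b _ hadj
  unfold Adj at hadj ⊢
  simp only at *
  rcases (by omega : (a.2 = b.2 ∧ (a.1 - b.1).natAbs = 1) ∨
      ((a.2 - b.2).natAbs = 1 ∧ a.1 = b.1)) with ⟨h1, h2⟩ | ⟨h1, h2⟩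
  · right; rw [h1]; simpa using h2
  · rcases (by omega : a.2 = b.2 + 1 ∨ b.2 = a.2 + 1) with h | h
    · rcases phiR_succ_cases S b.2 with hc | hc <;> rw [h, hc]
      · left; rw [h2]
      · right; simp [h2]
    · rcases phiR_succ_cases S a.2 with hc | hc <;> rw [h, hc]
      · left; rw [h2]
      · right; simp [h2]

end Aux

/-- compression preserves connectivity: the column compression, the row
compression and the baseline of a connected shape are connected shapes. -/
theorem compression_preserves_connectivity (S : Finset (ℤ × ℤ)) (hS : S.Nonempty)
    (hconn : ShapeConnected S) :
    ((KC S).Nonempty ∧ ShapeConnected (KC S)) ∧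
      ((KR S).Nonempty ∧ ShapeConnected (KR S)) ∧
      ((Baseline S).Nonempty ∧ ShapeConnected (Baseline S)) := by
  have hKC : (KC S).Nonempty ∧ ShapeConnected (KC S) := by
    refine ⟨hS.image _, ?_⟩
    exact connected_image S _ (adj_KC S) hconn
  have hKRgen : ∀ T : Finset (ℤ × ℤ), T.Nonempty → ShapeConnected T →
      (KR T).Nonempty ∧ ShapeConnected (KR T) := by
    intro T hT hTc
    exact ⟨hT.image _, connected_image T _ (adj_KR T) hTc⟩
  exact ⟨hKC, hKRgen S hS hconn, hKRgen (KC S) hKC.1 hKC.2⟩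
end

section
/- Let S_I and S_F be connected shapes such that B(S_I) = B(S_F), m_C(S_I) = m_C(S_F), m_R(S_I) = m_R(S_F), M_C(S_I, i) ≤ M_C(S_F, i) for all 0 ≤ i < m_C(S_I), and M_R(S_I, i) ≤ M_R(S_F, i) for all 0 ≤ i < m_R(S_I). Then there exists a sequence of at most 2·⌈log₂ |S_F|⌉ east and north RC doubling operations transforming S_I into a translate of S_F. -/
namespace RCAux
open Finset

/-! ### Normal forms -/

def off (a : ℕ → ℕ) (i : ℕ) : ℕ := ∑ j ∈ Finset.range i, a j

lemma off_succ (a : ℕ → ℕ) (i : ℕ) : off a (i+1) = off a i + a i :=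
  Finset.sum_range_succ a i

lemma off_mono (a : ℕ → ℕ) {i j : ℕ} (h : i ≤ j) : off a i ≤ off a j :=
  Finset.sum_le_sum_of_subset (Finset.range_subset_range.2 h)

lemma off_add (a δ : ℕ → ℕ) (i : ℕ) :
    off (fun k => a k + δ k) i = off a i + off δ i :=
  Finset.sum_add_distrib

noncomputable def blk (a : ℕ → ℕ) (i : ℕ) : Finset ℤ :=
  Finset.Ico (off a i : ℤ) ((off a i : ℤ) + a i)

lemma mem_blk {a : ℕ → ℕ} {i : ℕ} {x : ℤ} :
    x ∈ blk a i ↔ (off a i : ℤ) ≤ x ∧ x < (off a i : ℤ) + a i := Finset.mem_Ico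

lemma blk_le_of_lt {a : ℕ → ℕ} {i j : ℕ} (hij : i < j) {x x' : ℤ}
    (hx : x ∈ blk a i) (hx' : x' ∈ blk a j) : x < x' := by
  rw [mem_blk] at hx hx'
  have h1 : off a (i+1) ≤ off a j := off_mono a hij
  have h2 : off a (i+1) = off a i + a i := off_succ a i
  have := hx.2; have := hx'.1
  push_cast at *
  omega

lemma blk_inj {a : ℕ → ℕ} {i j : ℕ} {x : ℤ}
    (hx : x ∈ blk a i) (hx' : x ∈ blk a j) : i = j := by
  rcases lt_trichotomy i j with h | h | h
  · exact absurd (blk_le_of_lt h hx hx') (lt_irrefl x)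
  · exact h
  · exact absurd (blk_le_of_lt h hx' hx) (lt_irrefl x)

noncomputable def NF (B : Finset (ℤ × ℤ)) (a b : ℕ → ℕ) : Finset (ℤ × ℤ) :=
  B.biUnion fun q => blk a q.1.toNat ×ˢ blk b q.2.toNat

lemma mem_NF {B : Finset (ℤ × ℤ)} {a b : ℕ → ℕ} {p : ℤ × ℤ} :
    p ∈ NF B a b ↔ ∃ q ∈ B, p.1 ∈ blk a q.1.toNat ∧ p.2 ∈ blk b q.2.toNat := by
  simp [NF, Finset.mem_biUnion, Finset.mem_product]

/-! ### The doubled column set -/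

noncomputable def Dset (a δ : ℕ → ℕ) (m : ℕ) : Finset ℤ :=
  (Finset.range m).biUnion fun i => Finset.Ico (off a i : ℤ) ((off a i : ℤ) + δ i)

lemma mem_Dset {a δ : ℕ → ℕ} {m : ℕ} {x : ℤ} :
    x ∈ Dset a δ m ↔ ∃ i < m, (off a i : ℤ) ≤ x ∧ x < (off a i : ℤ) + δ i := by
  simp [Dset, Finset.mem_biUnion, Finset.mem_Ico]

lemma Dset_subset_blk {a δ : ℕ → ℕ} (hδ : ∀ i, δ i ≤ a i) {x : ℤ} {i : ℕ}
    (h1 : (off a i : ℤ) ≤ x) (h2 : x < (off a i : ℤ) + δ i) : x ∈ blk a i := by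
  rw [mem_blk]
  have := hδ i
  constructor
  · exact h1
  · have : (δ i : ℤ) ≤ a i := by exact_mod_cast hδ i
    omega

lemma wD_Dset (a δ : ℕ → ℕ) (m : ℕ) (hδ : ∀ i, δ i ≤ a i) {i : ℕ} (him : i < m) {x : ℤ}
    (hx1 : (off a i : ℤ) ≤ x) (hx2 : x ≤ (off a i : ℤ) + a i) :
    (wD (Dset a δ m) x : ℤ) = (off δ i : ℤ) + min (δ i : ℤ) (x - off a i) := by
  classical
  unfold wD Dset
  rw [Finset.filter_biUnion]
  have hdisj : ∀ j ∈ Finset.range m, ∀ j' ∈ Finset.range m, j ≠ j' →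
      Disjoint (Finset.filter (· < x) (Finset.Ico (off a j : ℤ) ((off a j : ℤ) + δ j)))
        (Finset.filter (· < x) (Finset.Ico (off a j' : ℤ) ((off a j' : ℤ) + δ j'))) := by
    intro j _ j' _ hne
    apply Finset.disjoint_left.2
    intro z hz hz'
    simp only [Finset.mem_filter, Finset.mem_Ico] at hz hz'
    exact hne (blk_inj (Dset_subset_blk hδ hz.1.1 hz.1.2) (Dset_subset_blk hδ hz'.1.1 hz'.1.2))
  rw [Finset.card_biUnion hdisj]
  have hterm : ∀ j, Finset.filter (· < x) (Finset.Ico (off a j : ℤ) ((off a j : ℤ) + δ j))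
      = Finset.Ico (off a j : ℤ) (min ((off a j : ℤ) + δ j) x) := by
    intro j
    simpa using Finset.Ico_filter_lt (off a j : ℤ) ((off a j : ℤ) + δ j) x
  have hsum : ∀ j ∈ Finset.range m,
      (Finset.filter (· < x) (Finset.Ico (off a j : ℤ) ((off a j : ℤ) + δ j))).card
      = (min ((off a j : ℤ) + δ j) x - off a j).toNat := by
    intro j _
    rw [hterm j, Int.card_Ico]
  rw [Finset.sum_congr rfl hsum]
  -- now evaluate the sum
  have hzero : ∀ j ∈ Finset.range m, j ∉ Finset.range (i+1) →
      (min ((off a j : ℤ) + δ j) x - off a j).toNat = 0 := by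
    intro j _ hj
    have hij : i < j := by
      simp only [Finset.mem_range] at hj; omega
    have h1 : off a (i+1) ≤ off a j := off_mono a hij
    have h2 : off a (i+1) = off a i + a i := off_succ a i
    have hxj : x ≤ (off a j : ℤ) := by push_cast at *; omega
    have : min ((off a j : ℤ) + δ j) x ≤ off a j := le_trans (min_le_right _ _) hxj
    omega
  rw [← Finset.sum_subset (Finset.range_subset_range.2 him) hzero]
  rw [Finset.sum_range_succ]
  have hlow : ∀ j ∈ Finset.range i,
      (min ((off a j : ℤ) + δ j) x - off a j).toNat = δ j := by
    intro j hj
    have hij : j < i := Finset.mem_range.1 hj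
    have h1 : off a (j+1) ≤ off a i := off_mono a hij
    have h2 : off a (j+1) = off a j + a j := off_succ a j
    have h3 : δ j ≤ a j := hδ j
    have : (off a j : ℤ) + δ j ≤ x := by push_cast at *; omega
    rw [min_eq_left this]
    omega
  rw [Finset.sum_congr rfl hlow]
  have : (∑ j ∈ Finset.range i, δ j) = off δ i := rfl
  rw [this]
  have hnn : (0:ℤ) ≤ min ((off a i : ℤ) + δ i) x - off a i := by
    have : (off a i : ℤ) ≤ min ((off a i : ℤ) + δ i) x := le_min (by omega) hx1
    omega
  push_cast [Int.toNat_of_nonneg hnn]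
  omega

end RCAux
namespace RCAux
open Finset

lemma RCE_NF (B : Finset (ℤ × ℤ)) (a b δ : ℕ → ℕ) (m n : ℕ)
    (hB : ∀ q ∈ B, ∃ i j : ℕ, q = ((i:ℤ), (j:ℤ)) ∧ i < m ∧ j < n)
    (hB2 : ∀ i < m, ∃ j : ℕ, ((i:ℤ), (j:ℤ)) ∈ B)
    (hb : ∀ j < n, 1 ≤ b j)
    (hδ : ∀ i, δ i ≤ a i)
    (hne : ∃ i < m, δ i ≠ 0) :
    eastAdmissible (NF B a b) (Dset a δ m) ∧
      RCE (NF B a b) (Dset a δ m) = NF B (fun k => a k + δ k) b := by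
  classical
  have hcast : ∀ i : ℕ, ((i:ℤ)).toNat = i := fun i => Int.toNat_natCast i
  constructor
  · constructor
    · obtain ⟨i0, him, hδ0⟩ := hne
      refine ⟨(off a i0 : ℤ), mem_Dset.2 ⟨i0, him, le_refl _, ?_⟩⟩
      have : 1 ≤ δ i0 := Nat.one_le_iff_ne_zero.2 hδ0
      push_cast
      omega
    · intro d hd
      obtain ⟨i, him, h1, h2⟩ := mem_Dset.1 hd
      obtain ⟨j, hjB⟩ := hB2 i him
      obtain ⟨i', j', heq, hi', hj'⟩ := hB _ hjB
      have hii : i' = i := by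
        have h := congrArg Prod.fst heq
        simp only at h
        exact_mod_cast h.symm
      have hjj : j' = j := by
        have h := congrArg Prod.snd heq
        simp only at h
        exact_mod_cast h.symm
      have hjn : j < n := hjj ▸ hj'
      refine ⟨(off b j : ℤ), mem_NF.2 ⟨((i:ℤ),(j:ℤ)), hjB, ?_, ?_⟩⟩
      · simp only [hcast]
        exact Dset_subset_blk hδ h1 h2
      · simp only [hcast, mem_blk]
        have := hb j hjn
        refine ⟨le_refl _, ?_⟩
        push_cast
        omega
  · ext p
    obtain ⟨x', y⟩ := p
    constructor
    · intro hp
      rw [RCE, Finset.mem_union] at hp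
      rcases hp with hp | hp
      · obtain ⟨⟨x, y0⟩, hmem, heq⟩ := Finset.mem_image.1 hp
        simp only [Prod.mk.injEq] at heq
        obtain ⟨hx', hy⟩ := heq
        obtain ⟨q, hqB, hxb, hyb⟩ := mem_NF.1 hmem
        obtain ⟨i, j, rfl, him, hjn⟩ := hB q hqB
        simp only [hcast] at hxb hyb
        rw [mem_blk] at hxb
        have hw := wD_Dset a δ m hδ him hxb.1 (le_of_lt hxb.2)
        have hδa : (δ i : ℤ) ≤ (a i : ℤ) := by exact_mod_cast hδ i
        refine mem_NF.2 ⟨((i:ℤ),(j:ℤ)), hqB, ?_, ?_⟩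
        · simp only [hcast, mem_blk, off_add]
          rcases le_total (δ i : ℤ) (x - off a i) with hc | hc
          · rw [min_eq_left hc] at hw
            push_cast at *
            omega
          · rw [min_eq_right hc] at hw
            push_cast at *
            omega
        · simp only [hcast]
          rw [← hy]
          exact hyb
      · obtain ⟨⟨x, y0⟩, hmem0, heq⟩ := Finset.mem_image.1 hp
        obtain ⟨hmem, hxD⟩ := Finset.mem_filter.1 hmem0
        simp only [Prod.mk.injEq] at heq
        obtain ⟨hx', hy⟩ := heq
        obtain ⟨q, hqB, hxb, hyb⟩ := mem_NF.1 hmem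
        obtain ⟨i, j, rfl, him, hjn⟩ := hB q hqB
        simp only [hcast] at hxb hyb
        rw [mem_blk] at hxb
        obtain ⟨i'', him'', hd1, hd2⟩ := mem_Dset.1 hxD
        have hii : i'' = i := blk_inj (Dset_subset_blk hδ hd1 hd2) (mem_blk.2 hxb)
        subst hii
        have hw := wD_Dset a δ m hδ him'' hxb.1 (le_of_lt hxb.2)
        have hδa : (δ i'' : ℤ) ≤ (a i'' : ℤ) := by exact_mod_cast hδ i''
        rw [min_eq_right (by omega)] at hw
        refine mem_NF.2 ⟨((i'':ℤ),(j:ℤ)), hqB, ?_, ?_⟩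
        · simp only [hcast, mem_blk, off_add]
          push_cast at *
          omega
        · simp only [hcast]
          rw [← hy]
          exact hyb
    · intro hp
      obtain ⟨q, hqB, hxb, hyb⟩ := mem_NF.1 hp
      obtain ⟨i, j, rfl, him, hjn⟩ := hB q hqB
      simp only [hcast] at hxb hyb
      simp only [mem_blk, off_add] at hxb
      push_cast at hxb
      have hδa : (δ i : ℤ) ≤ (a i : ℤ) := by exact_mod_cast hδ i
      rw [RCE, Finset.mem_union]
      rcases lt_or_ge (x' - off a i - off δ i) (2 * (δ i : ℤ)) with hcase | hcase
      · rcases Int.even_or_odd (x' - off a i - off δ i) with ⟨k, hk⟩ | ⟨k, hk⟩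
        · left
          have hxblk : (off a i : ℤ) + k ∈ blk a i := by
            rw [mem_blk]; push_cast; omega
          have hw := wD_Dset a δ m hδ him (x := (off a i : ℤ) + k)
            (by push_cast; omega) (by push_cast; omega)
          rw [min_eq_right (by push_cast; omega)] at hw
          apply Finset.mem_image.2
          refine ⟨((off a i : ℤ) + k, y), mem_NF.2 ⟨((i:ℤ),(j:ℤ)), hqB, ?_, ?_⟩, ?_⟩
          · simp only [hcast]; exact hxblk
          · simp only [hcast]; exact hyb
          · simp only [Prod.mk.injEq]
            exact ⟨by omega, trivial⟩
        · right
          have hk0 : 0 ≤ k := by omega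
          have hkδ : k < (δ i : ℤ) := by omega
          have hxD : (off a i : ℤ) + k ∈ Dset a δ m := by
            rw [mem_Dset]
            exact ⟨i, him, by omega, by omega⟩
          have hxblk : (off a i : ℤ) + k ∈ blk a i := by
            rw [mem_blk]; push_cast; omega
          have hw := wD_Dset a δ m hδ him (x := (off a i : ℤ) + k)
            (by omega) (by push_cast; omega)
          rw [min_eq_right (by omega)] at hw
          apply Finset.mem_image.2
          refine ⟨((off a i : ℤ) + k, y), Finset.mem_filter.2
            ⟨mem_NF.2 ⟨((i:ℤ),(j:ℤ)), hqB, ?_, ?_⟩, hxD⟩, ?_⟩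
          · simp only [hcast]; exact hxblk
          · simp only [hcast]; exact hyb
          · simp only [Prod.mk.injEq]
            exact ⟨by omega, trivial⟩
      · left
        have hxblk : x' - off δ i - δ i ∈ blk a i := by
          rw [mem_blk]; push_cast; omega
        have hw := wD_Dset a δ m hδ him (x := x' - off δ i - δ i)
          (by push_cast; omega) (by push_cast; omega)
        rw [min_eq_left (by push_cast; omega)] at hw
        apply Finset.mem_image.2
        refine ⟨(x' - off δ i - δ i, y), mem_NF.2 ⟨((i:ℤ),(j:ℤ)), hqB, ?_, ?_⟩, ?_⟩
        · simp only [hcast]; exact hxblk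
        · simp only [hcast]; exact hyb
        · simp only [Prod.mk.injEq]
          exact ⟨by omega, trivial⟩

end RCAux
namespace RCAux
open Finset

def Reach (k : ℕ) (S T : Finset (ℤ × ℤ)) : Prop :=
  ∃ f : ℕ → Finset (ℤ × ℤ), f 0 = S ∧ (∀ i < k, RCStep (f i) (f (i+1))) ∧ f k = T

lemma reach_rfl (S : Finset (ℤ × ℤ)) : Reach 0 S S :=
  ⟨fun _ => S, rfl, fun i hi => absurd hi (by omega), rfl⟩

lemma Reach.cons {S T U : Finset (ℤ × ℤ)} {k : ℕ} (h : RCStep S T) (ht : Reach k T U) :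
    Reach (k+1) S U := by
  obtain ⟨f, h0, hstep, hk⟩ := ht
  refine ⟨fun i => Nat.casesOn i S (fun j => f j), rfl, ?_, hk⟩
  intro i hi
  cases i with
  | zero => simpa [h0] using h
  | succ j => exact hstep j (by omega)

lemma Reach.trans {k l : ℕ} {S T U : Finset (ℤ × ℤ)} (h1 : Reach k S T) (h2 : Reach l T U) :
    Reach (k + l) S U := by
  obtain ⟨f, hf0, hfs, hfk⟩ := h1
  obtain ⟨g, hg0, hgs, hgl⟩ := h2
  refine ⟨fun i => if i < k then f i else g (i - k), ?_, ?_, ?_⟩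
  · by_cases h : 0 < k
    · simp [h, hf0]
    · have hk0 : k = 0 := by omega
      subst hk0
      simp only [Nat.lt_irrefl, if_false, Nat.sub_zero]
      rw [hg0, ← hfk]
      exact hf0
  · intro i hi
    by_cases h1i : i + 1 < k
    · have hik : i < k := by omega
      simp only [if_pos hik, if_pos h1i]
      exact hfs i (by omega)
    · by_cases h2i : i < k
      · have hik : i + 1 = k := by omega
        simp only [if_pos h2i, if_neg (by omega : ¬ i + 1 < k)]
        have hh : g (i + 1 - k) = g 0 := by rw [hik]; simp
        rw [hh, hg0, ← hfk, ← hik]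
        exact hfs i (by omega)
      · simp only [if_neg h2i, if_neg (by omega : ¬ i + 1 < k)]
        have hh : i + 1 - k = (i - k) + 1 := by omega
        rw [hh]
        exact hgs (i - k) (by omega)
  · simp only [if_neg (by omega : ¬ k + l < k)]
    have hh : k + l - k = l := by omega
    rw [hh, hgl]

lemma NF_congr {B : Finset (ℤ × ℤ)} {a A b : ℕ → ℕ} {m n : ℕ}
    (hB : ∀ q ∈ B, ∃ i j : ℕ, q = ((i:ℤ), (j:ℤ)) ∧ i < m ∧ j < n)
    (h : ∀ i < m, a i = A i) : NF B a b = NF B A b := by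
  unfold NF
  apply Finset.biUnion_congr rfl
  intro q hq
  obtain ⟨i, j, rfl, him, hjn⟩ := hB q hq
  have hoff : off a ((i:ℤ)).toNat = off A ((i:ℤ)).toNat := by
    apply Finset.sum_congr rfl
    intro x hx
    simp only [Int.toNat_natCast, Finset.mem_range] at hx ⊢
    exact h x (by omega)
  have hai : a ((i:ℤ)).toNat = A ((i:ℤ)).toNat := by
    simp only [Int.toNat_natCast]
    exact h i him
  have hblk : blk a ((i:ℤ)).toNat = blk A ((i:ℤ)).toNat := by
    unfold blk
    rw [hoff, hai]
  show blk a ((i:ℤ)).toNat ×ˢ blk b ((j:ℤ)).toNat = blk A ((i:ℤ)).toNat ×ˢ blk b ((j:ℤ)).toNat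
  rw [hblk]

lemma phase_east (B : Finset (ℤ × ℤ)) (b : ℕ → ℕ) (m n : ℕ)
    (hB : ∀ q ∈ B, ∃ i j : ℕ, q = ((i:ℤ), (j:ℤ)) ∧ i < m ∧ j < n)
    (hB2 : ∀ i < m, ∃ j : ℕ, ((i:ℤ), (j:ℤ)) ∈ B)
    (hb : ∀ j < n, 1 ≤ b j) :
    ∀ k (a A : ℕ → ℕ), (∀ i < m, 1 ≤ a i) → (∀ i, a i ≤ A i) → (∀ i < m, A i ≤ 2 ^ k * a i) →
      ∃ k' ≤ k, Reach k' (NF B a b) (NF B A b) := by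
  intro k
  induction k with
  | zero =>
    intro a A ha1 haA hAa
    have heq : NF B a b = NF B A b := by
      apply NF_congr hB
      intro i him
      have h1 := hAa i him
      have h2 := haA i
      rw [pow_zero, one_mul] at h1
      omega
    refine ⟨0, le_refl 0, ?_⟩
    rw [heq]
    exact reach_rfl _
  | succ k ih =>
    intro a A ha1 haA hAa
    by_cases hEq : ∀ i < m, a i = A i
    · refine ⟨0, by omega, ?_⟩
      rw [NF_congr hB hEq]
      exact reach_rfl _
    · push_neg at hEq
      set δ : ℕ → ℕ := fun i => min (2 * a i) (A i) - a i with hδdef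
      have hδa : ∀ i, δ i ≤ a i := by
        intro i
        simp only [hδdef]
        omega
      have hne : ∃ i < m, δ i ≠ 0 := by
        obtain ⟨i, him, hia⟩ := hEq
        refine ⟨i, him, ?_⟩
        have := haA i
        have := ha1 i him
        simp only [hδdef]
        omega
      obtain ⟨hadm, hrce⟩ := RCE_NF B a b δ m n hB hB2 hb hδa hne
      set a' : ℕ → ℕ := fun i => a i + δ i with ha'def
      have ha'min : ∀ i, a' i = min (2 * a i) (A i) := by
        intro i
        simp only [ha'def, hδdef]
        have := haA i
        omega
      obtain ⟨k', hk', hr⟩ := ih a' A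
        (fun i him => by have := ha1 i him; simp only [ha'def]; omega)
        (fun i => by rw [ha'min i]; exact min_le_right _ _)
        (by
          intro i him
          have h2 : 2 ^ (k+1) = 2 * 2 ^ k := by ring
          have h2k : 1 ≤ 2 ^ k := Nat.one_le_two_pow
          have hA2 := hAa i him
          rw [h2] at hA2
          rw [ha'min i]
          rcases le_total (A i) (2 * a i) with hc | hc
          · rw [min_eq_right hc]
            calc A i = 1 * A i := (one_mul _).symm
            _ ≤ 2 ^ k * A i := Nat.mul_le_mul_right _ h2k
          · rw [min_eq_left hc]
            have hring : 2 ^ k * (2 * a i) = 2 * 2 ^ k * a i := by ring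
            omega)
      refine ⟨k' + 1, by omega, Reach.cons ⟨Dset a δ m, Or.inl ⟨hadm, hrce.symm⟩⟩ hr⟩

end RCAux
namespace RCAux
open Finset

lemma xs_nonempty {S : Finset (ℤ × ℤ)} (hS : S.Nonempty) : (S.image Prod.fst).Nonempty :=
  hS.image _

lemma xmin_eq_min' {S : Finset (ℤ × ℤ)} (hS : S.Nonempty) :
    xmin S = (S.image Prod.fst).min' (xs_nonempty hS) := by
  rw [xmin, ← Finset.coe_min' (xs_nonempty hS)]
  rfl

lemma xmin_le {S : Finset (ℤ × ℤ)} (hS : S.Nonempty) {x : ℤ}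
    (hx : x ∈ S.image Prod.fst) : xmin S ≤ x := by
  rw [xmin_eq_min' hS]; exact Finset.min'_le _ _ hx

lemma xmin_mem {S : Finset (ℤ × ℤ)} (hS : S.Nonempty) : xmin S ∈ S.image Prod.fst := by
  rw [xmin_eq_min' hS]; exact Finset.min'_mem _ _

lemma mem_colS {S : Finset (ℤ × ℤ)} {x y : ℤ} : y ∈ colS S x ↔ (x, y) ∈ S := by
  simp only [colS, Finset.mem_image, Finset.mem_filter]
  constructor
  · rintro ⟨⟨p1, p2⟩, ⟨hp, h1⟩, h2⟩
    dsimp at h1 h2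
    subst h1; subst h2; exact hp
  · intro h; exact ⟨(x, y), ⟨h, rfl⟩, rfl⟩

lemma mem_rowS {S : Finset (ℤ × ℤ)} {x y : ℤ} : x ∈ rowS S y ↔ (x, y) ∈ S := by
  simp only [rowS, Finset.mem_image, Finset.mem_filter]
  constructor
  · rintro ⟨⟨p1, p2⟩, ⟨hp, h1⟩, h2⟩
    dsimp at h1 h2
    subst h1; subst h2; exact hp
  · intro h; exact ⟨(x, y), ⟨h, rfl⟩, rfl⟩

lemma path_covers {S : Finset (ℤ × ℤ)} {u v : ℤ × ℤ}
    (h : Relation.ReflTransGen (fun a b => a ∈ S ∧ b ∈ S ∧ Adj a b) u v) (hu : u ∈ S) :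
    ∀ x : ℤ, u.1 ≤ x → x ≤ v.1 → ∃ w ∈ S, w.1 = x := by
  induction h with
  | refl => intro x h1 h2; exact ⟨u, hu, by omega⟩
  | @tail b c hub hbc ih =>
    intro x h1 h2
    obtain ⟨hbS, hcS, hadj⟩ := hbc
    rcases le_or_gt x b.1 with h3 | h3
    · exact ih x h1 h3
    · have hadj' : (b.1 - c.1).natAbs + (b.2 - c.2).natAbs = 1 := hadj
      have hx : x = c.1 := by omega
      exact ⟨c, hcS, hx.symm⟩

lemma xs_interval {S : Finset (ℤ × ℤ)} (hS : S.Nonempty) (hc : ShapeConnected S) :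
    ∀ x, xmin S ≤ x → x ≤ (S.image Prod.fst).max' (xs_nonempty hS) → x ∈ S.image Prod.fst := by
  intro x h1 h2
  obtain ⟨u, hu, hu1⟩ := Finset.mem_image.1 (xmin_mem hS)
  obtain ⟨v, hv, hv1⟩ := Finset.mem_image.1 (Finset.max'_mem _ (xs_nonempty hS))
  obtain ⟨w, hw, hw1⟩ := path_covers (hc u hu v hv) hu x (by omega) (by omega)
  exact Finset.mem_image.2 ⟨w, hw, hw1⟩

lemma Icc_succ_left' (a b : ℤ) : Finset.Icc (a+1) b = Finset.Ioc a b := by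
  ext z
  simp only [Finset.mem_Icc, Finset.mem_Ioc]
  omega

lemma phiC_split (S : Finset (ℤ × ℤ)) {x x' : ℤ} (h0 : xmin S ≤ x) (h : x ≤ x') :
    phiC S x' = phiC S x +
      ((Finset.Ioc x x').filter fun z => colS S z ≠ colS S (z-1)).card := by
  unfold phiC
  rw [Icc_succ_left', Icc_succ_left']
  rw [← Finset.Ioc_union_Ioc_eq_Ioc h0 h, Finset.filter_union,
    Finset.card_union_of_disjoint (Finset.disjoint_filter_filter (by
      apply Finset.disjoint_left.2
      intro z hz hz'
      rw [Finset.mem_Ioc] at hz hz'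
      omega))]

lemma phiC_zero (S : Finset (ℤ × ℤ)) {x : ℤ} (h : x ≤ xmin S) : phiC S x = 0 := by
  unfold phiC
  rw [Finset.Icc_eq_empty (by omega)]
  simp

lemma phiC_mono (S : Finset (ℤ × ℤ)) {x x' : ℤ} (h : x ≤ x') : phiC S x ≤ phiC S x' :=
  Finset.card_le_card (Finset.filter_subset_filter _ (Finset.Icc_subset_Icc_right h))

lemma phiC_succ_le (S : Finset (ℤ × ℤ)) (x : ℤ) : phiC S (x+1) ≤ phiC S x + 1 := by
  unfold phiC
  have hsub : (Finset.Icc (xmin S + 1) (x+1)).filter (fun z => colS S z ≠ colS S (z-1))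
      ⊆ insert (x+1) ((Finset.Icc (xmin S + 1) x).filter (fun z => colS S z ≠ colS S (z-1))) := by
    intro z hz
    simp only [Finset.mem_filter, Finset.mem_Icc, Finset.mem_insert] at hz ⊢
    by_cases hzx : z = x + 1
    · exact Or.inl hzx
    · exact Or.inr ⟨⟨hz.1.1, by omega⟩, hz.2⟩
  calc ((Finset.Icc (xmin S + 1) (x+1)).filter (fun z => colS S z ≠ colS S (z-1))).card
      ≤ (insert (x+1) ((Finset.Icc (xmin S + 1) x).filter (fun z => colS S z ≠ colS S (z-1)))).card :=
        Finset.card_le_card hsub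
    _ ≤ _ + 1 := Finset.card_insert_le _ _

lemma col_const_of_no_change {S : Finset (ℤ × ℤ)} {x : ℤ} :
    ∀ x' : ℤ, x ≤ x' → (∀ z, x < z → z ≤ x' → colS S z = colS S (z-1)) →
      colS S x' = colS S x := by
  refine Int.le_induction ?_ ?_
  · intro _; rfl
  · intro t ht ih hall
    have h1 : colS S (t+1) = colS S (t+1-1) := hall (t+1) (by omega) (le_refl _)
    have h2 : t + 1 - 1 = t := by ring
    rw [h1, h2]
    exact ih (fun z hz1 hz2 => hall z hz1 (by omega))

lemma phiC_eq_imp_col_eq {S : Finset (ℤ × ℤ)} {x x' : ℤ} (h0 : xmin S ≤ x) (h : x ≤ x')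
    (he : phiC S x = phiC S x') : colS S x' = colS S x := by
  have hsplit := phiC_split S h0 h
  have hcard : ((Finset.Ioc x x').filter fun z => colS S z ≠ colS S (z-1)).card = 0 := by omega
  rw [Finset.card_eq_zero] at hcard
  apply col_const_of_no_change x' h
  intro z hz1 hz2
  by_contra hne
  have hz : z ∈ (Finset.Ioc x x').filter fun z => colS S z ≠ colS S (z-1) :=
    Finset.mem_filter.2 ⟨Finset.mem_Ioc.2 ⟨hz1, hz2⟩, hne⟩
  rw [hcard] at hz
  exact absurd hz (Finset.notMem_empty z)

lemma downclosed_eq_Icc {A : Finset ℤ} {x0 z : ℤ} (hA : A ⊆ Finset.Icc x0 z)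
    (hdc : ∀ x ∈ A, ∀ x', x0 ≤ x' → x' ≤ x → x' ∈ A) :
    A = Finset.Icc x0 (x0 + A.card - 1) := by
  rcases A.eq_empty_or_nonempty with h | h
  · rw [h]
    simp only [Finset.card_empty]
    rw [Finset.Icc_eq_empty (by omega)]
  · have hmax := A.max'_mem h
    have heq : A = Finset.Icc x0 (A.max' h) := by
      apply Finset.Subset.antisymm
      · intro w hw
        rw [Finset.mem_Icc]
        exact ⟨(Finset.mem_Icc.1 (hA hw)).1, Finset.le_max' _ _ hw⟩
      · intro w hw
        rw [Finset.mem_Icc] at hw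
        exact hdc _ hmax w hw.1 hw.2
    have hge : x0 ≤ A.max' h := (Finset.mem_Icc.1 (hA hmax)).1
    have hcard : A.card = (A.max' h + 1 - x0).toNat := by
      conv_lhs => rw [heq]
      rw [Int.card_Icc]
    have hmx : A.max' h = x0 + (A.card : ℤ) - 1 := by omega
    calc A = Finset.Icc x0 (A.max' h) := heq
    _ = Finset.Icc x0 (x0 + (A.card : ℤ) - 1) := by rw [hmx]

lemma levels {S : Finset (ℤ × ℤ)} (hS : S.Nonempty) (hc : ShapeConnected S) (i : ℕ) :
    (S.image Prod.fst).filter (fun x => phiC S x < i)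
      = Finset.Icc (xmin S) (xmin S + (off (MC S) i : ℤ) - 1) := by
  classical
  have hcardf : ((S.image Prod.fst).filter (fun x => phiC S x < i)).card = off (MC S) i := by
    have hsplit : (S.image Prod.fst).filter (fun x => phiC S x < i)
        = (Finset.range i).biUnion
            (fun j => (S.image Prod.fst).filter (fun x => phiC S x = j)) := by
      ext zz
      simp only [Finset.mem_filter, Finset.mem_biUnion, Finset.mem_range]
      constructor
      · rintro ⟨hz, hlt⟩; exact ⟨phiC S zz, hlt, hz, rfl⟩
      · rintro ⟨j, hj, hz, hje⟩; exact ⟨hz, by omega⟩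
    rw [hsplit, Finset.card_biUnion]
    · rfl
    · intro j _ j' _ hne
      apply Finset.disjoint_left.2
      intro zz hz hz'
      have h1 := (Finset.mem_filter.1 hz).2
      have h2 := (Finset.mem_filter.1 hz').2
      exact hne (h1 ▸ h2 ▸ rfl)
  rw [← hcardf]
  apply downclosed_eq_Icc (z := (S.image Prod.fst).max' (xs_nonempty hS))
  · intro w hw
    have hw' := (Finset.mem_filter.1 hw).1
    rw [Finset.mem_Icc]
    exact ⟨xmin_le hS hw', Finset.le_max' _ _ hw'⟩
  · intro w hw w' h1 h2
    obtain ⟨hwxs, hwlt⟩ := Finset.mem_filter.1 hw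
    refine Finset.mem_filter.2 ⟨?_, ?_⟩
    · exact xs_interval hS hc w' h1 (le_trans h2 (Finset.le_max' _ _ hwxs))
    · exact lt_of_le_of_lt (phiC_mono S h2) hwlt

lemma phiC_lt_mC {S : Finset (ℤ × ℤ)} {x : ℤ} (hx : x ∈ S.image Prod.fst) :
    phiC S x < mC S := by
  have := Finset.le_sup (f := phiC S) hx
  unfold mC
  omega

lemma xs_eq {S : Finset (ℤ × ℤ)} (hS : S.Nonempty) (hc : ShapeConnected S) :
    S.image Prod.fst = Finset.Icc (xmin S) (xmin S + (off (MC S) (mC S) : ℤ) - 1) := by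
  have h1 := levels hS hc (mC S)
  have h2 : (S.image Prod.fst).filter (fun x => phiC S x < mC S) = S.image Prod.fst :=
    Finset.filter_true_of_mem (fun x hx => phiC_lt_mC hx)
  rw [← h2, h1]

lemma block_char {S : Finset (ℤ × ℤ)} (hS : S.Nonempty) (hc : ShapeConnected S) {x : ℤ}
    (hx : x ∈ S.image Prod.fst) (i : ℕ) :
    phiC S x = i ↔
      ((off (MC S) i : ℤ) ≤ x - xmin S ∧ x - xmin S < off (MC S) (i+1)) := by
  have h1 := levels hS hc i
  have h2 := levels hS hc (i+1)
  have hxm : xmin S ≤ x := xmin_le hS hx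
  constructor
  · intro he
    constructor
    · by_contra hlt
      push_neg at hlt
      have hmem : x ∈ Finset.Icc (xmin S) (xmin S + (off (MC S) i : ℤ) - 1) :=
        Finset.mem_Icc.2 ⟨hxm, by omega⟩
      rw [← h1] at hmem
      have := (Finset.mem_filter.1 hmem).2
      omega
    · have hmem : x ∈ (S.image Prod.fst).filter (fun x => phiC S x < i+1) :=
        Finset.mem_filter.2 ⟨hx, by omega⟩
      rw [h2] at hmem
      have := Finset.mem_Icc.1 hmem
      omega
  · rintro ⟨hl, hr⟩
    have hin : phiC S x < i + 1 := by
      have hmem : x ∈ Finset.Icc (xmin S) (xmin S + (off (MC S) (i+1) : ℤ) - 1) :=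
        Finset.mem_Icc.2 ⟨hxm, by omega⟩
      rw [← h2] at hmem
      exact (Finset.mem_filter.1 hmem).2
    have hout : ¬ phiC S x < i := by
      intro hlt
      have hmem : x ∈ (S.image Prod.fst).filter (fun x => phiC S x < i) :=
        Finset.mem_filter.2 ⟨hx, hlt⟩
      rw [h1] at hmem
      have := Finset.mem_Icc.1 hmem
      omega
    omega

lemma block_occ {S : Finset (ℤ × ℤ)} (hS : S.Nonempty) (hc : ShapeConnected S) {x : ℤ} {i : ℕ}
    (hi : i < mC S) (hl : (off (MC S) i : ℤ) ≤ x - xmin S)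
    (hr : x - xmin S < off (MC S) (i+1)) :
    x ∈ S.image Prod.fst := by
  rw [xs_eq hS hc, Finset.mem_Icc]
  have hmono : off (MC S) (i+1) ≤ off (MC S) (mC S) := off_mono _ (by omega)
  have hnn : (0:ℤ) ≤ (off (MC S) i : ℤ) := by positivity
  constructor
  · omega
  · have : ((off (MC S) (i+1) : ℕ) : ℤ) ≤ ((off (MC S) (mC S) : ℕ) : ℤ) := by exact_mod_cast hmono
    omega

lemma climb {S : Finset (ℤ × ℤ)} :
    ∀ x : ℤ, xmin S ≤ x → ∀ i : ℕ, i ≤ phiC S x →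
      ∃ x'', xmin S ≤ x'' ∧ x'' ≤ x ∧ phiC S x'' = i := by
  refine Int.le_induction ?_ ?_
  · intro i hi
    have h0 : phiC S (xmin S) = 0 := phiC_zero S (le_refl _)
    exact ⟨xmin S, le_refl _, le_refl _, by omega⟩
  · intro t ht ih i hi
    rcases le_or_gt i (phiC S t) with h | h
    · obtain ⟨x'', h1, h2, h3⟩ := ih i h
      exact ⟨x'', h1, by omega, h3⟩
    · have hle := phiC_succ_le S t
      have : i = phiC S (t+1) := by omega
      exact ⟨t+1, by omega, le_refl _, this.symm⟩

lemma phi_surj {S : Finset (ℤ × ℤ)} (hS : S.Nonempty) (hc : ShapeConnected S) :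
    ∀ i < mC S, ∃ x ∈ S.image Prod.fst, phiC S x = i := by
  obtain ⟨xstar, hxstar, hsup⟩ :=
    Finset.exists_mem_eq_sup (S.image Prod.fst) (xs_nonempty hS) (phiC S)
  intro i hi
  have hix : i ≤ phiC S xstar := by
    unfold mC at hi
    omega
  obtain ⟨x'', h1, h2, h3⟩ := climb xstar (xmin_le hS hxstar) i hix
  exact ⟨x'', xs_interval hS hc x'' h1 (le_trans h2 (Finset.le_max' _ _ hxstar)), h3⟩

lemma MC_pos {S : Finset (ℤ × ℤ)} (hS : S.Nonempty) (hc : ShapeConnected S) :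
    ∀ i < mC S, 1 ≤ MC S i := by
  intro i hi
  obtain ⟨x, hx, hphi⟩ := phi_surj hS hc i hi
  have : x ∈ (S.image Prod.fst).filter (fun x => phiC S x = i) :=
    Finset.mem_filter.2 ⟨hx, hphi⟩
  have := Finset.card_pos.2 ⟨x, this⟩
  exact this

lemma MC_zero {S : Finset (ℤ × ℤ)} {i : ℕ} (hi : mC S ≤ i) : MC S i = 0 := by
  unfold MC
  rw [Finset.card_eq_zero, Finset.filter_eq_empty_iff]
  intro x hx
  have := phiC_lt_mC hx
  omega

end RCAux
namespace RCAux
open Finset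

def tr (S : Finset (ℤ × ℤ)) : Finset (ℤ × ℤ) := S.image Prod.swap

lemma tr_nonempty {S : Finset (ℤ × ℤ)} (hS : S.Nonempty) : (tr S).Nonempty :=
  hS.image _

lemma mem_tr {S : Finset (ℤ × ℤ)} {p : ℤ × ℤ} : p ∈ tr S ↔ (p.2, p.1) ∈ S := by
  obtain ⟨a, b⟩ := p
  rw [tr, Finset.mem_image]
  constructor
  · rintro ⟨⟨c, d⟩, h, heq⟩
    simp only [Prod.swap_prod_mk, Prod.mk.injEq] at heq
    obtain ⟨h1, h2⟩ := heq
    subst h1; subst h2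
    exact h
  · intro h
    exact ⟨(b, a), h, rfl⟩

lemma tr_tr (S : Finset (ℤ × ℤ)) : tr (tr S) = S := by
  ext ⟨a, b⟩
  simp only [mem_tr]

lemma colS_tr (S : Finset (ℤ × ℤ)) (x : ℤ) : colS (tr S) x = rowS S x := by
  ext z
  rw [mem_colS, mem_rowS, mem_tr]

lemma im_tr (S : Finset (ℤ × ℤ)) : (tr S).image Prod.fst = S.image Prod.snd := by
  rw [tr, Finset.image_image]
  rfl

lemma xmin_tr (S : Finset (ℤ × ℤ)) : xmin (tr S) = ymin S := by
  unfold xmin ymin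
  rw [im_tr]

lemma phiR_tr (S : Finset (ℤ × ℤ)) : phiR S = phiC (tr S) := by
  funext y
  simp only [phiR, phiC, xmin_tr, colS_tr]

lemma MR_tr (S : Finset (ℤ × ℤ)) : MR S = MC (tr S) := by
  funext i
  simp only [MR, MC, im_tr, ← phiR_tr]

lemma mR_tr (S : Finset (ℤ × ℤ)) : mR S = mC (tr S) := by
  simp only [mR, mC, im_tr, ← phiR_tr]

lemma connected_tr {S : Finset (ℤ × ℤ)} (hc : ShapeConnected S) : ShapeConnected (tr S) := by
  intro u hu v hv
  have hu' := mem_tr.1 hu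
  have hv' := mem_tr.1 hv
  have hpath := hc _ hu' _ hv'
  have hrel : ∀ a b : ℤ × ℤ, (a ∈ S ∧ b ∈ S ∧ Adj a b) →
      ((Prod.swap a) ∈ tr S ∧ (Prod.swap b) ∈ tr S ∧ Adj (Prod.swap a) (Prod.swap b)) := by
    rintro ⟨a1, a2⟩ ⟨b1, b2⟩ ⟨h1, h2, h3⟩
    have h3' : (a1 - b1).natAbs + (a2 - b2).natAbs = 1 := h3
    refine ⟨mem_tr.2 h1, mem_tr.2 h2, ?_⟩
    show (a2 - b2).natAbs + (a1 - b1).natAbs = 1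
    omega
  have hlift := Relation.ReflTransGen.lift
    (p := fun a b => a ∈ tr S ∧ b ∈ tr S ∧ Adj a b) Prod.swap hrel _ _ hpath
  exact hlift

lemma ymin_le {S : Finset (ℤ × ℤ)} (hS : S.Nonempty) {y : ℤ}
    (hy : y ∈ S.image Prod.snd) : ymin S ≤ y := by
  rw [← xmin_tr]
  exact xmin_le (tr_nonempty hS) (by rw [im_tr]; exact hy)

lemma phiR_eq_imp_row_eq {S : Finset (ℤ × ℤ)} {y y' : ℤ} (h0 : ymin S ≤ y) (h : y ≤ y')
    (he : phiR S y = phiR S y') : rowS S y' = rowS S y := by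
  have hcol := phiC_eq_imp_col_eq (S := tr S) (x := y) (x' := y')
    (by rw [xmin_tr]; exact h0) h (by rw [← phiR_tr]; exact he)
  rwa [colS_tr, colS_tr] at hcol

lemma phiR_lt_mR {S : Finset (ℤ × ℤ)} {y : ℤ} (hy : y ∈ S.image Prod.snd) :
    phiR S y < mR S := by
  have := Finset.le_sup (f := phiR S) hy
  unfold mR
  omega

lemma block_charR {S : Finset (ℤ × ℤ)} (hS : S.Nonempty) (hc : ShapeConnected S) {y : ℤ}
    (hy : y ∈ S.image Prod.snd) (j : ℕ) :
    phiR S y = j ↔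
      ((off (MR S) j : ℤ) ≤ y - ymin S ∧ y - ymin S < off (MR S) (j+1)) := by
  have h := block_char (S := tr S) (tr_nonempty hS) (connected_tr hc) (x := y)
    (by rw [im_tr]; exact hy) j
  rw [← phiR_tr, xmin_tr, ← MR_tr] at h
  exact h

lemma block_occR {S : Finset (ℤ × ℤ)} (hS : S.Nonempty) (hc : ShapeConnected S) {y : ℤ}
    {j : ℕ} (hj : j < mR S) (hl : (off (MR S) j : ℤ) ≤ y - ymin S)
    (hr : y - ymin S < off (MR S) (j+1)) : y ∈ S.image Prod.snd := by
  rw [← im_tr]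
  exact block_occ (tr_nonempty hS) (connected_tr hc) (by rw [← mR_tr]; exact hj)
    (by rw [xmin_tr, ← MR_tr]; exact hl) (by rw [xmin_tr, ← MR_tr]; exact hr)

lemma MR_pos {S : Finset (ℤ × ℤ)} (hS : S.Nonempty) (hc : ShapeConnected S) :
    ∀ j < mR S, 1 ≤ MR S j := by
  intro j hj
  rw [MR_tr]
  exact MC_pos (tr_nonempty hS) (connected_tr hc) j (by rw [← mR_tr]; exact hj)

lemma MR_zero {S : Finset (ℤ × ℤ)} {j : ℕ} (hj : mR S ≤ j) : MR S j = 0 := by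
  rw [MR_tr]
  exact MC_zero (by rw [← mR_tr]; exact hj)

end RCAux
namespace RCAux
open Finset

lemma KC_snd (S : Finset (ℤ × ℤ)) : (KC S).image Prod.snd = S.image Prod.snd := by
  rw [KC, Finset.image_image]
  rfl

lemma ymin_KC (S : Finset (ℤ × ℤ)) : ymin (KC S) = ymin S := by
  unfold ymin
  rw [KC_snd]

lemma rowS_KC (S : Finset (ℤ × ℤ)) (y : ℤ) :
    rowS (KC S) y = (rowS S y).image (fun x => (phiC S x : ℤ)) := by
  ext z
  rw [mem_rowS]
  constructor
  · intro h
    obtain ⟨⟨p1, p2⟩, hp, heq⟩ := Finset.mem_image.1 h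
    simp only [Prod.mk.injEq] at heq
    obtain ⟨h1, h2⟩ := heq
    refine Finset.mem_image.2 ⟨p1, mem_rowS.2 ?_, h1⟩
    rwa [h2] at hp
  · intro h
    obtain ⟨x, hx, rfl⟩ := Finset.mem_image.1 h
    exact Finset.mem_image.2 ⟨(x, y), mem_rowS.1 hx, rfl⟩

lemma row_sub_of_image_eq {S : Finset (ℤ × ℤ)} (hS : S.Nonempty) {y y' : ℤ}
    (h : (rowS S y).image (fun x => (phiC S x : ℤ))
       = (rowS S y').image (fun x => (phiC S x : ℤ))) :
    rowS S y ⊆ rowS S y' := by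
  intro x hx
  have hmem : (phiC S x : ℤ) ∈ (rowS S y').image (fun x => (phiC S x : ℤ)) :=
    h ▸ Finset.mem_image_of_mem _ hx
  obtain ⟨x', hx', he⟩ := Finset.mem_image.1 hmem
  have hphi : phiC S x' = phiC S x := by exact_mod_cast he
  have hxS : (x, y) ∈ S := mem_rowS.1 hx
  have hx'S : (x', y') ∈ S := mem_rowS.1 hx'
  have hxocc : x ∈ S.image Prod.fst := Finset.mem_image.2 ⟨(x, y), hxS, rfl⟩
  have hx'occ : x' ∈ S.image Prod.fst := Finset.mem_image.2 ⟨(x', y'), hx'S, rfl⟩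
  have hcol : colS S x = colS S x' := by
    rcases le_total x x' with hle | hle
    · exact (phiC_eq_imp_col_eq (xmin_le hS hxocc) hle (by omega)).symm
    · exact phiC_eq_imp_col_eq (xmin_le hS hx'occ) hle (by omega)
  have : y' ∈ colS S x' := mem_colS.2 hx'S
  rw [← hcol] at this
  exact mem_rowS.2 (mem_colS.1 this)

lemma row_eq_iff_image_eq {S : Finset (ℤ × ℤ)} (hS : S.Nonempty) (y y' : ℤ) :
    (rowS S y).image (fun x => (phiC S x : ℤ))
      = (rowS S y').image (fun x => (phiC S x : ℤ)) ↔ rowS S y = rowS S y' :=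
  ⟨fun h => Finset.Subset.antisymm (row_sub_of_image_eq hS h) (row_sub_of_image_eq hS h.symm),
   fun h => by rw [h]⟩

lemma phiR_KC {S : Finset (ℤ × ℤ)} (hS : S.Nonempty) : phiR (KC S) = phiR S := by
  funext y
  unfold phiR
  rw [ymin_KC]
  apply congrArg
  apply Finset.filter_congr
  intro z _
  simp only [rowS_KC, ne_eq]
  exact not_congr (row_eq_iff_image_eq hS _ _)

lemma Baseline_eq {S : Finset (ℤ × ℤ)} (hS : S.Nonempty) :
    Baseline S = S.image (fun p => ((phiC S p.1 : ℤ), (phiR S p.2 : ℤ))) := by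
  unfold Baseline KR
  rw [phiR_KC hS]
  unfold KC
  rw [Finset.image_image]
  rfl

lemma Baseline_mem {S : Finset (ℤ × ℤ)} (hS : S.Nonempty) :
    ∀ q ∈ Baseline S, ∃ i j : ℕ, q = ((i:ℤ), (j:ℤ)) ∧ i < mC S ∧ j < mR S := by
  intro q hq
  rw [Baseline_eq hS] at hq
  obtain ⟨p, hp, rfl⟩ := Finset.mem_image.1 hq
  refine ⟨phiC S p.1, phiR S p.2, rfl, ?_, ?_⟩
  · exact phiC_lt_mC (Finset.mem_image.2 ⟨p, hp, rfl⟩)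
  · exact phiR_lt_mR (Finset.mem_image.2 ⟨p, hp, rfl⟩)

lemma Baseline_surj_col {S : Finset (ℤ × ℤ)} (hS : S.Nonempty) (hc : ShapeConnected S) :
    ∀ i < mC S, ∃ j : ℕ, ((i:ℤ), (j:ℤ)) ∈ Baseline S := by
  intro i hi
  obtain ⟨x, hx, hphi⟩ := phi_surj hS hc i hi
  obtain ⟨p, hp, rfl⟩ := Finset.mem_image.1 hx
  refine ⟨phiR S p.2, ?_⟩
  rw [Baseline_eq hS]
  refine Finset.mem_image.2 ⟨p, hp, ?_⟩
  rw [hphi]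

lemma Baseline_surj_row {S : Finset (ℤ × ℤ)} (hS : S.Nonempty) (hc : ShapeConnected S) :
    ∀ j < mR S, ∃ i : ℕ, ((i:ℤ), (j:ℤ)) ∈ Baseline S := by
  intro j hj
  have hj' : j < mC (tr S) := by rw [← mR_tr]; exact hj
  obtain ⟨y, hy, hphi⟩ := phi_surj (tr_nonempty hS) (connected_tr hc) j hj'
  rw [im_tr] at hy
  obtain ⟨p, hp, rfl⟩ := Finset.mem_image.1 hy
  refine ⟨phiC S p.1, ?_⟩
  rw [Baseline_eq hS]
  refine Finset.mem_image.2 ⟨p, hp, ?_⟩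
  have : phiR S p.2 = j := by rw [phiR_tr]; exact hphi
  rw [this]

lemma reconstruction {S : Finset (ℤ × ℤ)} (hS : S.Nonempty) (hc : ShapeConnected S) :
    S = translateSh (xmin S, ymin S) (NF (Baseline S) (MC S) (MR S)) := by
  ext p
  obtain ⟨x, y⟩ := p
  constructor
  · intro hp
    have hxocc : x ∈ S.image Prod.fst := Finset.mem_image.2 ⟨(x, y), hp, rfl⟩
    have hyocc : y ∈ S.image Prod.snd := Finset.mem_image.2 ⟨(x, y), hp, rfl⟩
    refine Finset.mem_image.2 ⟨(x - xmin S, y - ymin S), ?_, ?_⟩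
    · refine mem_NF.2 ⟨((phiC S x : ℤ), (phiR S y : ℤ)), ?_, ?_, ?_⟩
      · rw [Baseline_eq hS]
        exact Finset.mem_image.2 ⟨(x, y), hp, rfl⟩
      · rw [Int.toNat_natCast, mem_blk]
        have hbc := (block_char hS hc hxocc (phiC S x)).1 rfl
        have hsucc : ((off (MC S) (phiC S x + 1) : ℕ) : ℤ)
            = (off (MC S) (phiC S x) : ℤ) + MC S (phiC S x) := by
          exact_mod_cast off_succ (MC S) (phiC S x)
        omega
      · rw [Int.toNat_natCast, mem_blk]
        have hbc := (block_charR hS hc hyocc (phiR S y)).1 rfl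
        have hsucc : ((off (MR S) (phiR S y + 1) : ℕ) : ℤ)
            = (off (MR S) (phiR S y) : ℤ) + MR S (phiR S y) := by
          exact_mod_cast off_succ (MR S) (phiR S y)
        omega
    · simp only [Prod.mk.injEq]
      omega
  · intro hp
    obtain ⟨⟨x'', y''⟩, hmem, heq⟩ := Finset.mem_image.1 hp
    simp only [Prod.mk.injEq] at heq
    obtain ⟨hx, hy⟩ := heq
    obtain ⟨q, hqB, hxb, hyb⟩ := mem_NF.1 hmem
    obtain ⟨i, j, rfl, him, hjn⟩ := Baseline_mem hS q hqB
    simp only [Int.toNat_natCast] at hxb hyb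
    rw [mem_blk] at hxb hyb
    have hsuccC : ((off (MC S) (i+1) : ℕ) : ℤ) = (off (MC S) i : ℤ) + MC S i := by
      exact_mod_cast off_succ (MC S) i
    have hsuccR : ((off (MR S) (j+1) : ℕ) : ℤ) = (off (MR S) j : ℤ) + MR S j := by
      exact_mod_cast off_succ (MR S) j
    have hxocc : x ∈ S.image Prod.fst := block_occ hS hc him (by omega) (by omega)
    have hyocc : y ∈ S.image Prod.snd := block_occR hS hc hjn (by omega) (by omega)
    have hphix : phiC S x = i := (block_char hS hc hxocc i).2 ⟨by omega, by omega⟩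
    have hphiy : phiR S y = j := (block_charR hS hc hyocc j).2 ⟨by omega, by omega⟩
    have hq2 := hqB
    rw [Baseline_eq hS] at hq2
    obtain ⟨p0, hp0, heq0⟩ := Finset.mem_image.1 hq2
    simp only [Prod.mk.injEq] at heq0
    have hphi0x : phiC S p0.1 = i := by exact_mod_cast heq0.1
    have hphi0y : phiR S p0.2 = j := by exact_mod_cast heq0.2
    have hp0xocc : p0.1 ∈ S.image Prod.fst := Finset.mem_image.2 ⟨p0, hp0, rfl⟩
    have hp0yocc : p0.2 ∈ S.image Prod.snd := Finset.mem_image.2 ⟨p0, hp0, rfl⟩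
    have hcol : colS S x = colS S p0.1 := by
      rcases le_total x p0.1 with hle | hle
      · exact (phiC_eq_imp_col_eq (xmin_le hS hxocc) hle (by omega)).symm
      · exact phiC_eq_imp_col_eq (xmin_le hS hp0xocc) hle (by omega)
    have hrow : rowS S y = rowS S p0.2 := by
      rcases le_total y p0.2 with hle | hle
      · exact (phiR_eq_imp_row_eq (ymin_le hS hyocc) hle (by omega)).symm
      · exact phiR_eq_imp_row_eq (ymin_le hS hp0yocc) hle (by omega)
    have h1 : (x, p0.2) ∈ S := by
      have hmc : p0.2 ∈ colS S p0.1 := mem_colS.2 hp0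
      rw [← hcol] at hmc
      exact mem_colS.1 hmc
    have h2 : x ∈ rowS S p0.2 := mem_rowS.2 h1
    rw [← hrow] at h2
    exact mem_rowS.1 h2

end RCAux
namespace RCAux
open Finset

lemma mem_translate {v : ℤ × ℤ} {S : Finset (ℤ × ℤ)} {p : ℤ × ℤ} :
    p ∈ translateSh v S ↔ (p.1 - v.1, p.2 - v.2) ∈ S := by
  obtain ⟨a, b⟩ := p
  simp only [translateSh, Finset.mem_image]
  constructor
  · rintro ⟨⟨c, d⟩, h, heq⟩
    simp only [Prod.mk.injEq] at heq
    have h1 : a - v.1 = c := by omega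
    have h2 : b - v.2 = d := by omega
    rw [show ((a,b).1 - v.1, (a,b).2 - v.2) = (c, d) from by simp only [Prod.mk.injEq]; omega]
    exact h
  · intro h
    exact ⟨(a - v.1, b - v.2), h, by simp only [Prod.mk.injEq]; omega⟩

lemma translate_translate (u v : ℤ × ℤ) (S : Finset (ℤ × ℤ)) :
    translateSh u (translateSh v S) = translateSh (v.1 + u.1, v.2 + u.2) S := by
  ext p
  simp only [mem_translate]
  have h1 : p.1 - (v.1 + u.1, v.2 + u.2).1 = p.1 - u.1 - v.1 := by simp; ring
  have h2 : p.2 - (v.1 + u.1, v.2 + u.2).2 = p.2 - u.2 - v.2 := by simp; ring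
  rw [h1, h2]

lemma wD_translate (D : Finset ℤ) (c x : ℤ) : wD (D.image (· + c)) (x + c) = wD D x := by
  unfold wD
  have heq : (D.image (· + c)).filter (· < x + c) = (D.filter (· < x)).image (· + c) := by
    ext z
    simp only [Finset.mem_filter, Finset.mem_image]
    constructor
    · rintro ⟨⟨d, hd, rfl⟩, hlt⟩
      exact ⟨d, ⟨hd, by omega⟩, rfl⟩
    · rintro ⟨d, ⟨hd, hlt⟩, rfl⟩
      exact ⟨⟨d, hd, rfl⟩, by omega⟩
  rw [heq, Finset.card_image_of_injective _ (add_left_injective c)]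

lemma filter_translate (S : Finset (ℤ × ℤ)) (c d : ℤ) (D : Finset ℤ) :
    (translateSh (c, d) S).filter (fun p => p.1 ∈ D.image (· + c))
      = (S.filter (fun p => p.1 ∈ D)).image (fun p => (p.1 + c, p.2 + d)) := by
  ext ⟨a, b⟩
  simp only [Finset.mem_filter, translateSh, Finset.mem_image, Prod.mk.injEq]
  constructor
  · rintro ⟨⟨⟨e, f⟩, h, h1, h2⟩, hD⟩
    obtain ⟨g, hg, h3⟩ := hD
    refine ⟨(e, f), ⟨h, ?_⟩, h1, h2⟩
    have hge : g = e := by dsimp at h1 h2 ⊢; omega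
    rwa [← hge]
  · rintro ⟨⟨e, f⟩, ⟨h, hD⟩, h1, h2⟩
    exact ⟨⟨(e, f), h, h1, h2⟩, ⟨e, hD, h1⟩⟩

lemma RCE_translate (S : Finset (ℤ × ℤ)) (D : Finset ℤ) (c d : ℤ) :
    RCE (translateSh (c, d) S) (D.image (· + c)) = translateSh (c, d) (RCE S D) := by
  unfold RCE
  rw [filter_translate]
  unfold translateSh
  rw [Finset.image_union]
  simp only [Finset.image_image]
  congr 1
  · apply Finset.image_congr
    intro p _
    simp only [Function.comp_apply, Prod.mk.injEq]
    refine ⟨?_, trivial⟩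
    rw [wD_translate]
    ring
  · apply Finset.image_congr
    intro p _
    simp only [Function.comp_apply, Prod.mk.injEq]
    refine ⟨?_, trivial⟩
    rw [wD_translate]
    ring

lemma tr_translate (c d : ℤ) (S : Finset (ℤ × ℤ)) :
    tr (translateSh (c, d) S) = translateSh (d, c) (tr S) := by
  unfold tr translateSh
  simp only [Finset.image_image]
  apply Finset.image_congr
  intro p _
  rfl

lemma tr_filter_D (S : Finset (ℤ × ℤ)) (D : Finset ℤ) :
    (tr S).filter (fun p => p.1 ∈ D) = (S.filter (fun p => p.2 ∈ D)).image Prod.swap := by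
  ext ⟨a, b⟩
  simp only [Finset.mem_filter, Finset.mem_image, tr]
  constructor
  · rintro ⟨⟨⟨e, f⟩, h, heq⟩, hD⟩
    refine ⟨(e, f), ⟨h, ?_⟩, heq⟩
    have : f = a := by
      have := congrArg Prod.fst heq
      simpa using this
    rwa [this]
  · rintro ⟨⟨e, f⟩, ⟨h, hD⟩, heq⟩
    refine ⟨⟨(e, f), h, heq⟩, ?_⟩
    have : f = a := by
      have := congrArg Prod.fst heq
      simpa using this
    rwa [this] at hD

lemma RCN_eq_tr (S : Finset (ℤ × ℤ)) (D : Finset ℤ) : RCN S D = tr (RCE (tr S) D) := by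
  unfold RCN RCE
  rw [tr_filter_D]
  unfold tr
  rw [Finset.image_union]
  simp only [Finset.image_image]
  congr 1

lemma RCE_eq_tr (S : Finset (ℤ × ℤ)) (D : Finset ℤ) : RCE S D = tr (RCN (tr S) D) := by
  rw [RCN_eq_tr, tr_tr, tr_tr]

lemma RCN_translate (S : Finset (ℤ × ℤ)) (D : Finset ℤ) (c d : ℤ) :
    RCN (translateSh (c, d) S) (D.image (· + d)) = translateSh (c, d) (RCN S D) := by
  rw [RCN_eq_tr, tr_translate, RCE_translate, tr_translate, ← RCN_eq_tr]

lemma RCStep_translate {S T : Finset (ℤ × ℤ)} (c d : ℤ) (h : RCStep S T) :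
    RCStep (translateSh (c, d) S) (translateSh (c, d) T) := by
  obtain ⟨D, hcase⟩ := h
  rcases hcase with ⟨⟨hne, hadm⟩, rfl⟩ | ⟨⟨hne, hadm⟩, rfl⟩
  · refine ⟨D.image (· + c), Or.inl ⟨⟨hne.image _, ?_⟩, (RCE_translate S D c d).symm⟩⟩
    intro e he
    obtain ⟨f, hf, rfl⟩ := Finset.mem_image.1 he
    obtain ⟨y0, hy0⟩ := hadm f hf
    refine ⟨y0 + d, ?_⟩
    rw [mem_translate]
    have heq : (((f + c : ℤ), (y0 + d : ℤ)).1 - c, ((f + c : ℤ), (y0 + d : ℤ)).2 - d) = (f, y0) := by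
      simp only [Prod.mk.injEq]
      omega
    rw [heq]
    exact hy0
  · refine ⟨D.image (· + d), Or.inr ⟨⟨hne.image _, ?_⟩, (RCN_translate S D c d).symm⟩⟩
    intro e he
    obtain ⟨f, hf, rfl⟩ := Finset.mem_image.1 he
    obtain ⟨x0, hx0⟩ := hadm f hf
    refine ⟨x0 + c, ?_⟩
    rw [mem_translate]
    have heq : (((x0 + c : ℤ), (f + d : ℤ)).1 - c, ((x0 + c : ℤ), (f + d : ℤ)).2 - d) = (x0, f) := by
      simp only [Prod.mk.injEq]
      omega
    rw [heq]
    exact hx0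

lemma RCStep_swap {S T : Finset (ℤ × ℤ)} (h : RCStep S T) : RCStep (tr S) (tr T) := by
  obtain ⟨D, hcase⟩ := h
  rcases hcase with ⟨⟨hne, hadm⟩, rfl⟩ | ⟨⟨hne, hadm⟩, rfl⟩
  · refine ⟨D, Or.inr ⟨⟨hne, ?_⟩, ?_⟩⟩
    · intro e he
      obtain ⟨y0, hy0⟩ := hadm e he
      exact ⟨y0, mem_tr.2 hy0⟩
    · rw [RCN_eq_tr, tr_tr]
  · refine ⟨D, Or.inl ⟨⟨hne, ?_⟩, ?_⟩⟩
    · intro e he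
      obtain ⟨x0, hx0⟩ := hadm e he
      exact ⟨x0, mem_tr.2 hx0⟩
    · rw [RCE_eq_tr, tr_tr]

lemma Reach_translate {k : ℕ} {S T : Finset (ℤ × ℤ)} (c d : ℤ) (h : Reach k S T) :
    Reach k (translateSh (c, d) S) (translateSh (c, d) T) := by
  obtain ⟨f, h0, hs, hk⟩ := h
  exact ⟨fun i => translateSh (c, d) (f i), by dsimp only; rw [h0],
    fun i hi => RCStep_translate c d (hs i hi), by dsimp only; rw [hk]⟩

lemma Reach_swap {k : ℕ} {S T : Finset (ℤ × ℤ)} (h : Reach k S T) : Reach k (tr S) (tr T) := by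
  obtain ⟨f, h0, hs, hk⟩ := h
  exact ⟨fun i => tr (f i), by dsimp only; rw [h0], fun i hi => RCStep_swap (hs i hi),
    by dsimp only; rw [hk]⟩

lemma tr_NF (B : Finset (ℤ × ℤ)) (a b : ℕ → ℕ) :
    tr (NF B a b) = NF (B.image Prod.swap) b a := by
  ext ⟨x, y⟩
  rw [mem_tr, mem_NF, mem_NF]
  constructor
  · rintro ⟨q, hq, h1, h2⟩
    refine ⟨Prod.swap q, Finset.mem_image_of_mem _ hq, ?_, ?_⟩
    · exact h2
    · exact h1
  · rintro ⟨q, hq, h1, h2⟩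
    obtain ⟨q0, hq0, rfl⟩ := Finset.mem_image.1 hq
    exact ⟨q0, hq0, h2, h1⟩

end RCAux
namespace RCAux
open Finset

lemma tr_NF' (B : Finset (ℤ × ℤ)) (a b : ℕ → ℕ) : tr (NF B a b) = NF (tr B) b a :=
  tr_NF B a b

lemma translate_zero (S : Finset (ℤ × ℤ)) : translateSh (0, 0) S = S := by
  ext p
  rw [mem_translate]
  simp

end RCAux
open RCAux in
/-- under the multiplicity conditions, `S_F` can be obtained from `S_I`
(up to translation) by at most `2⌈log₂ |S_F|⌉` RC doubling operations. -/
theorem RC_log_constructor (S_I S_F : Finset (ℤ × ℤ))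
    (hI : S_I.Nonempty) (hF : S_F.Nonempty)
    (hcI : ShapeConnected S_I) (hcF : ShapeConnected S_F)
    (hB : Baseline S_I = Baseline S_F)
    (hmC : mC S_I = mC S_F) (hmR : mR S_I = mR S_F)
    (hMC : ∀ i < mC S_I, MC S_I i ≤ MC S_F i)
    (hMR : ∀ i < mR S_I, MR S_I i ≤ MR S_F i) :
    ∃ m ≤ 2 * Nat.clog 2 S_F.card, ∃ T : ℕ → Finset (ℤ × ℤ),
      T 0 = S_I ∧ (∀ i < m, RCStep (T i) (T (i + 1))) ∧
        ∃ v : ℤ × ℤ, T m = translateSh v S_F := by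
  classical
  have hBmem := Baseline_mem hI
  have hB2col := Baseline_surj_col hI hcI
  have hB2row := Baseline_surj_row hI hcI
  have hbpos := MR_pos hI hcI
  have hapos := MC_pos hI hcI
  have hK : S_F.card ≤ 2 ^ Nat.clog 2 S_F.card := Nat.le_pow_clog (by norm_num) _
  have haA : ∀ i, MC S_I i ≤ MC S_F i := by
    intro i
    by_cases hi : i < mC S_I
    · exact hMC i hi
    · rw [MC_zero (le_of_not_gt hi)]
      exact Nat.zero_le _
  have hbb : ∀ j, MR S_I j ≤ MR S_F j := by
    intro j
    by_cases hj : j < mR S_I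
    · exact hMR j hj
    · rw [MR_zero (le_of_not_gt hj)]
      exact Nat.zero_le _
  have hMCF_le : ∀ i, MC S_F i ≤ S_F.card := by
    intro i
    calc MC S_F i ≤ (S_F.image Prod.fst).card :=
          Finset.card_le_card (Finset.filter_subset _ _)
    _ ≤ S_F.card := Finset.card_image_le
  have hMRF_le : ∀ j, MR S_F j ≤ S_F.card := by
    intro j
    calc MR S_F j ≤ (S_F.image Prod.snd).card :=
          Finset.card_le_card (Finset.filter_subset _ _)
    _ ≤ S_F.card := Finset.card_image_le
  have hAbound : ∀ i < mC S_I, MC S_F i ≤ 2 ^ (Nat.clog 2 S_F.card) * MC S_I i := by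
    intro i hi
    have h1 := hapos i hi
    calc MC S_F i ≤ S_F.card := hMCF_le i
    _ ≤ 2 ^ (Nat.clog 2 S_F.card) := hK
    _ = 2 ^ (Nat.clog 2 S_F.card) * 1 := (mul_one _).symm
    _ ≤ 2 ^ (Nat.clog 2 S_F.card) * MC S_I i := Nat.mul_le_mul_left _ h1
  have hBbound : ∀ j < mR S_I, MR S_F j ≤ 2 ^ (Nat.clog 2 S_F.card) * MR S_I j := by
    intro j hj
    have h1 := hbpos j hj
    calc MR S_F j ≤ S_F.card := hMRF_le j
    _ ≤ 2 ^ (Nat.clog 2 S_F.card) := hK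
    _ = 2 ^ (Nat.clog 2 S_F.card) * 1 := (mul_one _).symm
    _ ≤ 2 ^ (Nat.clog 2 S_F.card) * MR S_I j := Nat.mul_le_mul_left _ h1
  obtain ⟨k1, hk1, hr1⟩ := phase_east (Baseline S_I) (MR S_I) (mC S_I) (mR S_I)
    hBmem hB2col hbpos (Nat.clog 2 S_F.card) (MC S_I) (MC S_F) hapos haA hAbound
  have hBmemSw : ∀ q ∈ tr (Baseline S_I),
      ∃ i j : ℕ, q = ((i:ℤ), (j:ℤ)) ∧ i < mR S_I ∧ j < mC S_I := by
    intro q hq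
    rw [mem_tr] at hq
    obtain ⟨i, j, heq, hi, hj⟩ := hBmem _ hq
    obtain ⟨q1, q2⟩ := q
    simp only [Prod.mk.injEq] at heq
    refine ⟨j, i, ?_, hj, hi⟩
    simp only [Prod.mk.injEq]
    exact ⟨heq.2, heq.1⟩
  have hB2Sw : ∀ i < mR S_I, ∃ j : ℕ, ((i:ℤ), (j:ℤ)) ∈ tr (Baseline S_I) := by
    intro i hi
    obtain ⟨j, hj⟩ := hB2row i hi
    exact ⟨j, mem_tr.2 hj⟩
  have hApos : ∀ i < mC S_I, 1 ≤ MC S_F i := by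
    intro i hi
    exact MC_pos hF hcF i (by rw [← hmC]; exact hi)
  obtain ⟨k2, hk2, hr2⟩ := phase_east (tr (Baseline S_I)) (MC S_F) (mR S_I) (mC S_I)
    hBmemSw hB2Sw hApos (Nat.clog 2 S_F.card) (MR S_I) (MR S_F) hbpos hbb hBbound
  have hr2' := Reach_swap hr2
  rw [tr_NF', tr_NF', tr_tr] at hr2'
  have hr := hr1.trans hr2'
  have hrT := Reach_translate (xmin S_I) (ymin S_I) hr
  rw [← reconstruction hI hcI] at hrT
  have hXF : NF (Baseline S_F) (MC S_F) (MR S_F)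
      = translateSh (-(xmin S_F), -(ymin S_F)) S_F := by
    have h1 := reconstruction hF hcF
    calc NF (Baseline S_F) (MC S_F) (MR S_F)
        = translateSh (xmin S_F + -(xmin S_F), ymin S_F + -(ymin S_F))
            (NF (Baseline S_F) (MC S_F) (MR S_F)) := by
          rw [show (xmin S_F + -(xmin S_F), ymin S_F + -(ymin S_F)) = ((0:ℤ), (0:ℤ)) from by
            norm_num, RCAux.translate_zero]
    _ = translateSh (-(xmin S_F), -(ymin S_F))
          (translateSh (xmin S_F, ymin S_F) (NF (Baseline S_F) (MC S_F) (MR S_F))) := by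
          rw [RCAux.translate_translate]
    _ = translateSh (-(xmin S_F), -(ymin S_F)) S_F := by rw [← h1]
  have hend : translateSh (xmin S_I, ymin S_I) (NF (Baseline S_I) (MC S_F) (MR S_F))
      = translateSh (-(xmin S_F) + xmin S_I, -(ymin S_F) + ymin S_I) S_F := by
    rw [hB, hXF, RCAux.translate_translate]
  rw [hend] at hrT
  obtain ⟨f, hf0, hfs, hfk⟩ := hrT
  exact ⟨k1 + k2, by omega, f, hf0, hfs,
    ⟨(-(xmin S_F) + xmin S_I, -(ymin S_F) + ymin S_I), hfk⟩⟩
end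

section
/- Let S_F be a connected shape with n := |S_F| and baseline B := B(S_F). Then there exist a natural number m ≤ 4·|B| + 2·⌈log₂ n⌉ and a chain of connected shapes T_0, T_1, …, T_m with T_0 a singleton and T_m a translate of S_F, such that each step is a growth operation of one of the following two kinds: (i) a node-addition step, where for some direction d ∈ {(1,0), (−1,0), (0,1), (0,−1)} we have T_i ⊆ T_{i+1} ⊆ T_i ∪ {p + d : p ∈ T_i}; or (ii) an RC doubling step, where T_{i+1} = RC_E(T_i, D) or T_{i+1} = RC_N(T_i, D) for some admissible nonempty set D. -/
namespace SB
open Finset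

/-! ### Basic lemmas -/

lemma adj_iff {u v : ℤ × ℤ} : Adj u v ↔
    (u.1 = v.1 ∧ (u.2 = v.2 + 1 ∨ u.2 + 1 = v.2)) ∨
    (u.2 = v.2 ∧ (u.1 = v.1 + 1 ∨ u.1 + 1 = v.1)) := by
  unfold Adj; omega

lemma xmin_le {S : Finset (ℤ × ℤ)} {p : ℤ × ℤ} (hp : p ∈ S) : xmin S ≤ p.1 := by
  have h1 : p.1 ∈ S.image Prod.fst := Finset.mem_image_of_mem _ hp
  have h2 : (S.image Prod.fst).min ≤ (p.1 : WithTop ℤ) := Finset.min_le h1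
  unfold xmin
  rcases hmin : (S.image Prod.fst).min with _ | m
  · have : S.image Prod.fst = ∅ := Finset.min_eq_top.1 hmin
    rw [this] at h1; simp at h1
  · rw [hmin] at h2
    have : (m : WithTop ℤ) ≤ (p.1 : WithTop ℤ) := h2
    exact WithTop.coe_le_coe.1 this

lemma exists_xmin {S : Finset (ℤ × ℤ)} (hS : S.Nonempty) : ∃ y, (xmin S, y) ∈ S := by
  have h1 : (S.image Prod.fst).Nonempty := hS.image _
  obtain ⟨m, hm⟩ := Finset.min_of_nonempty h1
  have : m ∈ S.image Prod.fst := Finset.mem_of_min hm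
  obtain ⟨p, hp, hpx⟩ := Finset.mem_image.1 this
  refine ⟨p.2, ?_⟩
  have : xmin S = m := by unfold xmin; rw [hm]; rfl
  rw [this, ← hpx]; exact hp

lemma mem_colS {S : Finset (ℤ × ℤ)} {x y : ℤ} : y ∈ colS S x ↔ (x, y) ∈ S := by
  unfold colS
  simp only [Finset.mem_image, Finset.mem_filter]
  constructor
  · rintro ⟨p, ⟨hp, hx⟩, hy⟩
    have : p = (x, y) := by
      cases p; simp_all
    rwa [this] at hp
  · intro h; exact ⟨(x, y), ⟨h, rfl⟩, rfl⟩

/-! ### swap -/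

def swapSh (S : Finset (ℤ × ℤ)) : Finset (ℤ × ℤ) := S.image Prod.swap

lemma mem_swapSh {S : Finset (ℤ × ℤ)} {p : ℤ × ℤ} : p ∈ swapSh S ↔ p.swap ∈ S := by
  unfold swapSh
  simp only [Finset.mem_image]
  constructor
  · rintro ⟨q, hq, rfl⟩; simpa using hq
  · intro h; exact ⟨p.swap, h, by simp⟩

lemma swapSh_swapSh (S : Finset (ℤ × ℤ)) : swapSh (swapSh S) = S := by
  ext p; simp [mem_swapSh]

lemma adj_swap {u v : ℤ × ℤ} (h : Adj u v) : Adj u.swap v.swap := by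
  unfold Adj at *; simp [Prod.swap] at *; omega

lemma shapeConnected_swap {S : Finset (ℤ × ℤ)} (h : ShapeConnected S) :
    ShapeConnected (swapSh S) := by
  intro u hu v hv
  have hu' := mem_swapSh.1 hu
  have hv' := mem_swapSh.1 hv
  have hpath := h _ hu' _ hv'
  have main : ∀ a b : ℤ × ℤ,
      Relation.ReflTransGen (fun a b => a ∈ S ∧ b ∈ S ∧ Adj a b) a b →
      Relation.ReflTransGen (fun a b => a ∈ swapSh S ∧ b ∈ swapSh S ∧ Adj a b) a.swap b.swap := by
    intro a b hab
    induction hab with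
    | refl => exact Relation.ReflTransGen.refl
    | tail _ hstep ih =>
        exact ih.tail ⟨mem_swapSh.2 (by simpa using hstep.1),
          mem_swapSh.2 (by simpa using hstep.2.1), adj_swap hstep.2.2⟩
  have := main _ _ hpath
  simpa using this

lemma swapSh_nonempty {S : Finset (ℤ × ℤ)} (h : S.Nonempty) : (swapSh S).Nonempty :=
  h.image _

/-! ### Connectivity: the interval property -/

lemma col_nonempty_aux {S : Finset (ℤ × ℤ)} {u v : ℤ × ℤ}
    (h : Relation.ReflTransGen (fun a b => a ∈ S ∧ b ∈ S ∧ Adj a b) u v)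
    (hu : u ∈ S) : ∀ x : ℤ, u.1 ≤ x → x ≤ v.1 → ∃ y, (x, y) ∈ S := by
  induction h with
  | refl =>
      intro x h1 h2
      have : x = u.1 := le_antisymm h2 h1
      exact ⟨u.2, by rw [this]; simpa using hu⟩
  | @tail b c _ hstep ih =>
      intro x hx1 hx2
      by_cases hx : x ≤ b.1
      · exact ih x hx1 hx
      · push_neg at hx
        have hadj := hstep.2.2
        have hc1 : c.1 ≤ b.1 + 1 := by unfold Adj at hadj; omega
        have : x = c.1 := by omega
        exact ⟨c.2, by rw [this]; simpa using hstep.2.1⟩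

lemma col_nonempty_of_connected {S : Finset (ℤ × ℤ)} (hc : ShapeConnected S)
    {p q : ℤ × ℤ} (hp : p ∈ S) (hq : q ∈ S) {x : ℤ} (h1 : p.1 ≤ x) (h2 : x ≤ q.1) :
    ∃ y, (x, y) ∈ S :=
  col_nonempty_aux (hc p hp q hq) hp x h1 h2

end SB
namespace SB
open Finset

/-! ### phiC basics -/

def xmaxS (S : Finset (ℤ × ℤ)) : ℤ := WithBot.unbotD 0 ((S.image Prod.fst).max)

lemma le_xmaxS {S : Finset (ℤ × ℤ)} {p : ℤ × ℤ} (hp : p ∈ S) : p.1 ≤ xmaxS S := by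
  have h1 : p.1 ∈ S.image Prod.fst := Finset.mem_image_of_mem _ hp
  have h2 : (p.1 : WithBot ℤ) ≤ (S.image Prod.fst).max := Finset.le_max h1
  unfold xmaxS
  rcases hmax : (S.image Prod.fst).max with _ | m
  · have : S.image Prod.fst = ∅ := Finset.max_eq_bot.1 hmax
    rw [this] at h1; simp at h1
  · rw [hmax] at h2
    have : (p.1 : WithBot ℤ) ≤ (m : WithBot ℤ) := h2
    exact WithBot.coe_le_coe.1 this

lemma exists_xmaxS {S : Finset (ℤ × ℤ)} (hS : S.Nonempty) : ∃ y, (xmaxS S, y) ∈ S := by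
  have h1 : (S.image Prod.fst).Nonempty := hS.image _
  obtain ⟨m, hm⟩ := Finset.max_of_nonempty h1
  have : m ∈ S.image Prod.fst := Finset.mem_of_max hm
  obtain ⟨p, hp, hpx⟩ := Finset.mem_image.1 this
  refine ⟨p.2, ?_⟩
  have : xmaxS S = m := by unfold xmaxS; rw [hm]; rfl
  rw [this, ← hpx]; exact hp

lemma image_fst_eq_Icc {S : Finset (ℤ × ℤ)} (hS : S.Nonempty) (hc : ShapeConnected S) :
    S.image Prod.fst = Finset.Icc (xmin S) (xmaxS S) := by
  ext x
  simp only [Finset.mem_image, Finset.mem_Icc]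
  constructor
  · rintro ⟨p, hp, rfl⟩
    exact ⟨xmin_le hp, le_xmaxS hp⟩
  · rintro ⟨h1, h2⟩
    obtain ⟨y1, hy1⟩ := exists_xmin hS
    obtain ⟨y2, hy2⟩ := exists_xmaxS hS
    obtain ⟨y, hy⟩ := col_nonempty_of_connected hc hy1 hy2 h1 h2
    exact ⟨(x, y), hy, rfl⟩

lemma phiC_mono (S : Finset (ℤ × ℤ)) {x x' : ℤ} (h : x ≤ x') : phiC S x ≤ phiC S x' := by
  unfold phiC
  exact Finset.card_le_card (Finset.filter_subset_filter _
    (Finset.Icc_subset_Icc_right h))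

lemma phiC_xmin (S : Finset (ℤ × ℤ)) : phiC S (xmin S) = 0 := by
  unfold phiC
  rw [Finset.Icc_eq_empty (by omega)]
  simp

lemma phiC_succ (S : Finset (ℤ × ℤ)) {a : ℤ} (h : xmin S ≤ a) :
    phiC S (a + 1) = phiC S a + (if colS S (a + 1) ≠ colS S a then 1 else 0) := by
  unfold phiC
  have hIcc : Finset.Icc (xmin S + 1) (a + 1) = insert (a + 1) (Finset.Icc (xmin S + 1) a) := by
    ext z; simp only [Finset.mem_Icc, Finset.mem_insert]; omega
  rw [hIcc, Finset.filter_insert]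
  have hnot : (a + 1) ∉ Finset.Icc (xmin S + 1) a := by simp
  by_cases hcol : colS S (a + 1) ≠ colS S (a + 1 - 1)
  · rw [if_pos hcol, Finset.card_insert_of_notMem (fun hmem => hnot (Finset.mem_of_mem_filter _ hmem))]
    have : colS S (a + 1) ≠ colS S a := by simpa using hcol
    rw [if_pos this]
  · rw [if_neg hcol]
    have : ¬ colS S (a + 1) ≠ colS S a := by simpa using hcol
    rw [if_neg this]
    simp

lemma col_eq_of_phiC_eq (S : Finset (ℤ × ℤ)) {x x' : ℤ} (h0 : xmin S ≤ x') (hle : x' ≤ x)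
    (h : phiC S x' = phiC S x) : colS S x' = colS S x := by
  obtain ⟨k, hk⟩ : ∃ k : ℕ, x = x' + k := ⟨(x - x').toNat, by omega⟩
  subst hk
  clear hle
  induction k generalizing x' with
  | zero => simp
  | succ n ih =>
      have hstep := phiC_succ S h0
      have hc1 : (((n : ℕ) + 1 : ℕ) : ℤ) = (n : ℤ) + 1 := by push_cast; ring
      rw [hc1] at h ⊢
      have hmono2 : phiC S (x' + 1) ≤ phiC S (x' + ((n : ℤ) + 1)) := phiC_mono S (by omega)
      rw [← h] at hmono2
      have hmono1 : phiC S x' ≤ phiC S (x' + 1) := phiC_mono S (by omega)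
      have hcoleq : colS S (x' + 1) = colS S x' := by
        by_contra hne
        rw [if_pos hne] at hstep; omega
      have harr : x' + ((n : ℤ) + 1) = x' + 1 + (n : ℤ) := by ring
      rw [harr] at h ⊢
      have hmono3 : phiC S (x' + 1) ≤ phiC S (x' + 1 + (n : ℤ)) := phiC_mono S (by omega)
      have hphieq : phiC S (x' + 1) = phiC S (x' + 1 + (n : ℤ)) := by omega
      have := ih (x' := x' + 1) (by omega) hphieq
      rw [hcoleq] at this
      exact this

/-- Surjectivity of phiC onto an initial interval. -/
lemma phiC_surj (S : Finset (ℤ × ℤ)) {x : ℤ} (hx : xmin S ≤ x) :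
    ∀ i ≤ phiC S x, ∃ x', xmin S ≤ x' ∧ x' ≤ x ∧ phiC S x' = i := by
  obtain ⟨k, hk⟩ : ∃ k : ℕ, x = xmin S + k := ⟨(x - xmin S).toNat, by omega⟩
  subst hk
  induction k with
  | zero =>
      intro i hi
      simp only [Nat.cast_zero, add_zero] at *
      rw [phiC_xmin] at hi
      exact ⟨xmin S, le_refl _, le_refl _, by rw [phiC_xmin]; omega⟩
  | succ n ih =>
      intro i hi
      have hstep := phiC_succ S (a := xmin S + n) (by omega)
      have harg : xmin S + (n : ℤ) + 1 = xmin S + ((n : ℕ) + 1 : ℕ) := by push_cast; ring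
      rw [harg] at hstep
      by_cases hcase : i ≤ phiC S (xmin S + n)
      · obtain ⟨x', h1, h2, h3⟩ := ih (by omega) i hcase
        exact ⟨x', h1, by omega, h3⟩
      · refine ⟨xmin S + ((n : ℕ) + 1 : ℕ), by omega, le_refl _, ?_⟩
        by_cases hco : colS S (xmin S + (((n : ℕ) + 1 : ℕ) : ℤ)) ≠ colS S (xmin S + (n : ℕ))
        · rw [if_pos hco] at hstep; omega
        · rw [if_neg hco] at hstep; omega

end SB
namespace SB
open Finset

/-! ### KC lemmas -/

lemma mem_KC {S : Finset (ℤ × ℤ)} {q : ℤ × ℤ} :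
    q ∈ KC S ↔ ∃ p ∈ S, q = ((phiC S p.1 : ℤ), p.2) := by
  unfold KC
  simp only [Finset.mem_image]
  constructor
  · rintro ⟨p, hp, rfl⟩; exact ⟨p, hp, rfl⟩
  · rintro ⟨p, hp, rfl⟩; exact ⟨p, hp, rfl⟩

lemma KC_nonempty {S : Finset (ℤ × ℤ)} (h : S.Nonempty) : (KC S).Nonempty := h.image _

lemma KC_connected {S : Finset (ℤ × ℤ)} (hc : ShapeConnected S) :
    ShapeConnected (KC S) := by
  set F : ℤ × ℤ → ℤ × ℤ := fun p => ((phiC S p.1 : ℤ), p.2) with hF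
  have hmemF : ∀ p ∈ S, F p ∈ KC S := fun p hp => mem_KC.2 ⟨p, hp, rfl⟩
  have hstep : ∀ a b : ℤ × ℤ, a ∈ S → b ∈ S → Adj a b →
      Relation.ReflTransGen (fun x y => x ∈ KC S ∧ y ∈ KC S ∧ Adj x y) (F a) (F b) := by
    intro a b ha hb hadj
    rcases adj_iff.1 hadj with ⟨h1, h2⟩ | ⟨h1, h2⟩
    · -- vertical
      refine Relation.ReflTransGen.single ⟨hmemF a ha, hmemF b hb, ?_⟩
      apply adj_iff.2
      left
      exact ⟨by simp [hF, h1], by simpa [hF] using h2⟩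
    · -- horizontal
      rcases h2 with h2 | h2
      · -- a.1 = b.1 + 1
        have hx : xmin S ≤ b.1 := xmin_le hb
        have hphi := phiC_succ S hx
        rw [← h2] at hphi
        by_cases hco : colS S a.1 ≠ colS S b.1
        · rw [if_pos hco] at hphi
          refine Relation.ReflTransGen.single ⟨hmemF a ha, hmemF b hb, ?_⟩
          apply adj_iff.2
          right
          exact ⟨by simp [hF, h1], Or.inl (by simp [hF]; omega)⟩
        · rw [if_neg hco] at hphi
          have : F a = F b := by simp [hF]; constructor; omega; omega
          rw [this]
      · -- a.1 + 1 = b.1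
        have hx : xmin S ≤ a.1 := xmin_le ha
        have hphi := phiC_succ S hx
        rw [h2] at hphi
        by_cases hco : colS S b.1 ≠ colS S a.1
        · rw [if_pos hco] at hphi
          refine Relation.ReflTransGen.single ⟨hmemF a ha, hmemF b hb, ?_⟩
          apply adj_iff.2
          right
          exact ⟨by simp [hF, h1], Or.inr (by simp [hF]; omega)⟩
        · rw [if_neg hco] at hphi
          have : F a = F b := by simp [hF]; constructor; omega; omega
          rw [this]
  intro u hu v hv
  obtain ⟨p, hp, hpu⟩ := mem_KC.1 hu
  obtain ⟨q, hq, hqv⟩ := mem_KC.1 hv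
  subst hpu; subst hqv
  have main : ∀ a b : ℤ × ℤ,
      Relation.ReflTransGen (fun a b => a ∈ S ∧ b ∈ S ∧ Adj a b) a b →
      Relation.ReflTransGen (fun x y => x ∈ KC S ∧ y ∈ KC S ∧ Adj x y) (F a) (F b) := by
    intro a b hab
    induction hab with
    | refl => exact Relation.ReflTransGen.refl
    | tail _ hs ih => exact ih.trans (hstep _ _ hs.1 hs.2.1 hs.2.2)
  exact main p q (hc p hp q hq)

lemma KC_image_snd (S : Finset (ℤ × ℤ)) : (KC S).image Prod.snd = S.image Prod.snd := by
  unfold KC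
  rw [Finset.image_image]
  rfl

lemma ymin_KC (S : Finset (ℤ × ℤ)) : ymin (KC S) = ymin S := by
  unfold ymin
  rw [KC_image_snd]

lemma KC_card_le (S : Finset (ℤ × ℤ)) : (KC S).card ≤ S.card := Finset.card_image_le

lemma mC_eq (S : Finset (ℤ × ℤ)) (hS : S.Nonempty) (hc : ShapeConnected S) :
    mC S = phiC S (xmaxS S) + 1 := by
  unfold mC
  congr 1
  rw [image_fst_eq_Icc hS hc]
  apply le_antisymm
  · apply Finset.sup_le
    intro x hx
    exact phiC_mono S (Finset.mem_Icc.1 hx).2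
  · apply Finset.le_sup (f := phiC S)
    obtain ⟨y, hy⟩ := exists_xmaxS hS
    exact Finset.mem_Icc.2 ⟨xmin_le hy, le_refl _⟩

lemma KC_image_fst (S : Finset (ℤ × ℤ)) (hS : S.Nonempty) (hc : ShapeConnected S) :
    (KC S).image Prod.fst = Finset.Icc (0 : ℤ) ((mC S : ℤ) - 1) := by
  have hm : mC S = phiC S (xmaxS S) + 1 := mC_eq S hS hc
  unfold KC
  rw [Finset.image_image]
  have : (Prod.fst ∘ fun p : ℤ × ℤ => ((phiC S p.1 : ℤ), p.2)) =
      (fun x : ℤ => (phiC S x : ℤ)) ∘ Prod.fst := rfl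
  rw [this, ← Finset.image_image, image_fst_eq_Icc hS hc]
  ext i
  simp only [Finset.mem_image, Finset.mem_Icc]
  constructor
  · rintro ⟨x, hx, rfl⟩
    rcases hx with ⟨h1, h2⟩
    have := phiC_mono S h2
    constructor
    · positivity
    · omega
  · rintro ⟨h1, h2⟩
    have hi : i.toNat ≤ phiC S (xmaxS S) := by omega
    obtain ⟨y, hy⟩ := exists_xmin hS
    have hxm : xmin S ≤ xmaxS S := le_trans (by exact le_refl _) (le_xmaxS (p := (xmin S, y)) hy)
    obtain ⟨x', hx1, hx2, hx3⟩ := phiC_surj S hxm i.toNat hi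
    exact ⟨x', ⟨hx1, hx2⟩, by rw [hx3]; omega⟩

lemma MC_pos (S : Finset (ℤ × ℤ)) (hS : S.Nonempty) (hc : ShapeConnected S)
    {i : ℕ} (hi : i < mC S) : 1 ≤ MC S i := by
  have hm : mC S = phiC S (xmaxS S) + 1 := mC_eq S hS hc
  obtain ⟨y, hy⟩ := exists_xmin hS
  have hxm : xmin S ≤ xmaxS S := le_xmaxS (p := (xmin S, y)) hy
  obtain ⟨x', hx1, hx2, hx3⟩ := phiC_surj S hxm i (by omega)
  unfold MC
  show 0 < _
  rw [Finset.card_pos]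
  refine ⟨x', Finset.mem_filter.2 ⟨?_, hx3⟩⟩
  rw [image_fst_eq_Icc hS hc]
  exact Finset.mem_Icc.2 ⟨hx1, hx2⟩

lemma MC_le_card (S : Finset (ℤ × ℤ)) (i : ℕ) : MC S i ≤ S.card := by
  unfold MC
  exact le_trans (Finset.card_le_card (Finset.filter_subset _ _)) Finset.card_image_le

end SB
namespace SB
open Finset

/-! ### Expansion -/

def G (f : ℕ → ℕ) (j : ℕ) : ℕ := ∑ i ∈ Finset.range j, f i

lemma G_succ (f : ℕ → ℕ) (j : ℕ) : G f (j + 1) = G f j + f j := Finset.sum_range_succ f j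

lemma G_mono (f : ℕ → ℕ) {i j : ℕ} (h : i ≤ j) : G f i ≤ G f j :=
  Finset.sum_le_sum_of_subset (Finset.range_subset_range.2 h)

lemma G_block_le {f : ℕ → ℕ} {i j : ℕ} (h : i < j) : G f i + f i ≤ G f j := by
  calc G f i + f i = G f (i + 1) := (G_succ f i).symm
  _ ≤ G f j := G_mono f h

noncomputable def ExpandC (K : Finset (ℤ × ℤ)) (f : ℕ → ℕ) : Finset (ℤ × ℤ) :=
  K.biUnion fun p =>
    (Finset.Ico (G f p.1.toNat : ℤ) ((G f p.1.toNat : ℤ) + (f p.1.toNat : ℤ))) ×ˢ ({p.2} : Finset ℤ)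

lemma mem_ExpandC {K : Finset (ℤ × ℤ)} {f : ℕ → ℕ} {a b : ℤ} :
    (a, b) ∈ ExpandC K f ↔ ∃ p ∈ K,
      ((G f p.1.toNat : ℤ) ≤ a ∧ a < (G f p.1.toNat : ℤ) + (f p.1.toNat : ℤ)) ∧ b = p.2 := by
  unfold ExpandC
  simp only [Finset.mem_biUnion, Finset.mem_product, Finset.mem_Ico, Finset.mem_singleton]

/-- Counting identity. -/
lemma count_identity (S : Finset (ℤ × ℤ)) (hS : S.Nonempty) (hc : ShapeConnected S)
    {x : ℤ} (h1 : xmin S ≤ x) (h2 : x ≤ xmaxS S) :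
    (x - xmin S).toNat = G (MC S) (phiC S x) +
      ((Finset.Ico (xmin S) x).filter fun x' => phiC S x' = phiC S x).card := by
  have hfib : (Finset.Ico (xmin S) x).card =
      ∑ j ∈ Finset.range (phiC S x + 1),
        ((Finset.Ico (xmin S) x).filter fun x' => phiC S x' = j).card := by
    apply Finset.card_eq_sum_card_fiberwise
    intro x' hx'
    rw [Finset.mem_coe, Finset.mem_Ico] at hx'
    rw [Finset.mem_coe, Finset.mem_range]
    have := phiC_mono S (le_of_lt hx'.2)
    omega
  rw [Int.card_Ico] at hfib
  rw [Finset.sum_range_succ] at hfib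
  have hMC : ∀ j < phiC S x,
      ((Finset.Ico (xmin S) x).filter fun x' => phiC S x' = j).card = MC S j := by
    intro j hj
    unfold MC
    congr 1
    rw [image_fst_eq_Icc hS hc]
    ext x'
    simp only [Finset.mem_filter, Finset.mem_Ico, Finset.mem_Icc]
    constructor
    · rintro ⟨⟨ha, hb⟩, hphi⟩
      exact ⟨⟨ha, by omega⟩, hphi⟩
    · rintro ⟨⟨ha, hb⟩, hphi⟩
      refine ⟨⟨ha, ?_⟩, hphi⟩
      by_contra hlt
      push_neg at hlt
      have := phiC_mono S hlt
      omega
  have hsum : ∑ j ∈ Finset.range (phiC S x),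
      ((Finset.Ico (xmin S) x).filter fun x' => phiC S x' = j).card = G (MC S) (phiC S x) := by
    apply Finset.sum_congr rfl
    intro j hj
    exact hMC j (Finset.mem_range.1 hj)
  omega

lemma count_partial_lt (S : Finset (ℤ × ℤ)) (hS : S.Nonempty) (hc : ShapeConnected S)
    {x : ℤ} (h1 : xmin S ≤ x) (h2 : x ≤ xmaxS S) :
    ((Finset.Ico (xmin S) x).filter fun x' => phiC S x' = phiC S x).card < MC S (phiC S x) := by
  unfold MC
  apply Finset.card_lt_card
  rw [image_fst_eq_Icc hS hc]
  constructor
  · intro x' hx'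
    rw [Finset.mem_filter] at *
    rw [Finset.mem_Ico] at hx'
    refine ⟨Finset.mem_Icc.2 ⟨hx'.1.1, ?_⟩, hx'.2⟩
    omega
  · intro hsub
    have hx : x ∈ (Finset.Icc (xmin S) (xmaxS S)).filter fun x' => phiC S x' = phiC S x :=
      Finset.mem_filter.2 ⟨Finset.mem_Icc.2 ⟨h1, h2⟩, rfl⟩
    have := hsub hx
    rw [Finset.mem_filter, Finset.mem_Ico] at this
    omega

lemma count_partial_top (S : Finset (ℤ × ℤ)) (hS : S.Nonempty) (hc : ShapeConnected S) :
    ((Finset.Ico (xmin S) (xmaxS S)).filter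
      fun x' => phiC S x' = phiC S (xmaxS S)).card + 1 = MC S (phiC S (xmaxS S)) := by
  unfold MC
  rw [image_fst_eq_Icc hS hc]
  have hins : (Finset.Icc (xmin S) (xmaxS S)).filter (fun x' => phiC S x' = phiC S (xmaxS S)) =
      insert (xmaxS S) ((Finset.Ico (xmin S) (xmaxS S)).filter
        fun x' => phiC S x' = phiC S (xmaxS S)) := by
    ext x'
    simp only [Finset.mem_filter, Finset.mem_Icc, Finset.mem_Ico, Finset.mem_insert]
    constructor
    · rintro ⟨⟨ha, hb⟩, hphi⟩
      rcases eq_or_lt_of_le hb with h | h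
      · exact Or.inl h
      · exact Or.inr ⟨⟨ha, h⟩, hphi⟩
    · rintro (rfl | ⟨⟨ha, hb⟩, hphi⟩)
      · obtain ⟨y, hy⟩ := exists_xmaxS hS
        exact ⟨⟨xmin_le hy, le_refl _⟩, rfl⟩
      · exact ⟨⟨ha, le_of_lt hb⟩, hphi⟩
  rw [hins, Finset.card_insert_of_notMem (by simp [Finset.mem_filter])]

/-- The decompression lemma. -/
lemma expandC_KC (S : Finset (ℤ × ℤ)) (hS : S.Nonempty) (hc : ShapeConnected S) :
    ExpandC (KC S) (MC S) = translateSh (-xmin S, 0) S := by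
  obtain ⟨y0, hy0⟩ := exists_xmaxS hS
  have hxm : xmin S ≤ xmaxS S := xmin_le hy0
  ext ⟨a, b⟩
  rw [mem_ExpandC]
  unfold translateSh
  simp only [Finset.mem_image]
  constructor
  · rintro ⟨p, hp, ⟨hlo, hhi⟩, rfl⟩
    obtain ⟨q, hq, rfl⟩ := mem_KC.1 hp
    simp only [Int.toNat_natCast] at hlo hhi
    have hxmax_q : q.1 ≤ xmaxS S := le_xmaxS hq
    have hxmin_q : xmin S ≤ q.1 := xmin_le hq
    have ha0 : (0:ℤ) ≤ a := le_trans (by positivity) hlo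
    set x := a + xmin S with hxdef
    have hx1 : xmin S ≤ x := by omega
    -- x ≤ xmaxS S
    have hidX := count_identity S hS hc hxm (le_refl (xmaxS S))
    have htop := count_partial_top S hS hc
    have hGq : G (MC S) (phiC S q.1) + MC S (phiC S q.1) = G (MC S) (phiC S q.1 + 1) :=
      (G_succ _ _).symm
    have hGX : G (MC S) (phiC S (xmaxS S)) + MC S (phiC S (xmaxS S)) =
        G (MC S) (phiC S (xmaxS S) + 1) := (G_succ _ _).symm
    have hmonoφ : phiC S q.1 ≤ phiC S (xmaxS S) := phiC_mono S hxmax_q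
    have hGmono : G (MC S) (phiC S q.1 + 1) ≤ G (MC S) (phiC S (xmaxS S) + 1) :=
      G_mono _ (by omega)
    have hx2 : x ≤ xmaxS S := by omega
    have hidx := count_identity S hS hc hx1 hx2
    have hpartx := count_partial_lt S hS hc hx1 hx2
    have hphix : phiC S x = phiC S q.1 := by
      by_contra hne
      rcases Nat.lt_or_ge (phiC S x) (phiC S q.1) with h | h
      · have hb1 : G (MC S) (phiC S x) + MC S (phiC S x) ≤ G (MC S) (phiC S q.1) :=
          G_block_le h
        omega
      · have h' : phiC S q.1 < phiC S x := by omega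
        have hb1 : G (MC S) (phiC S q.1) + MC S (phiC S q.1) ≤ G (MC S) (phiC S x) :=
          G_block_le h'
        omega
    have hcol : colS S x = colS S q.1 := by
      rcases le_total x q.1 with h | h
      · exact col_eq_of_phiC_eq S hx1 h (by omega)
      · exact (col_eq_of_phiC_eq S hxmin_q h (by omega)).symm
    have hbmem : q.2 ∈ colS S x := by rw [hcol]; exact mem_colS.2 (by simpa using hq)
    refine ⟨(x, q.2), mem_colS.1 hbmem, ?_⟩
    simp only [Prod.mk.injEq]
    constructor
    · omega
    · ring
  · rintro ⟨r, hr, heq⟩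
    simp only [Prod.mk.injEq] at heq
    obtain ⟨heq1, heq2⟩ := heq
    have hxmin_r : xmin S ≤ r.1 := xmin_le hr
    have hxmax_r : r.1 ≤ xmaxS S := le_xmaxS hr
    refine ⟨((phiC S r.1 : ℤ), r.2), mem_KC.2 ⟨r, hr, rfl⟩, ?_, by simpa using heq2.symm⟩
    simp only [Int.toNat_natCast]
    have hidr := count_identity S hS hc hxmin_r hxmax_r
    have hpartr := count_partial_lt S hS hc hxmin_r hxmax_r
    omega

/-- Expansion with multiplicity one at every occupied column gives back the shape. -/
lemma expandC_one (K : Finset (ℤ × ℤ)) (m : ℕ)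
    (hK : K.image Prod.fst = Finset.Icc (0:ℤ) ((m:ℤ) - 1))
    (f : ℕ → ℕ) (hf : ∀ i < m, f i = 1) : ExpandC K f = K := by
  have hfst : ∀ p ∈ K, 0 ≤ p.1 ∧ p.1 < (m:ℤ) := by
    intro p hp
    have : p.1 ∈ K.image Prod.fst := Finset.mem_image_of_mem _ hp
    rw [hK] at this
    rw [Finset.mem_Icc] at this
    omega
  have hG : ∀ j ≤ m, G f j = j := by
    intro j hj
    unfold G
    rw [Finset.sum_congr rfl (fun i hi => hf i (lt_of_lt_of_le (Finset.mem_range.1 hi) hj))]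
    simp
  ext ⟨a, b⟩
  rw [mem_ExpandC]
  constructor
  · rintro ⟨p, hp, ⟨hlo, hhi⟩, rfl⟩
    obtain ⟨h0, hm'⟩ := hfst p hp
    have hjm : p.1.toNat < m := by omega
    rw [hG p.1.toNat (le_of_lt hjm)] at hlo hhi
    rw [hf p.1.toNat hjm] at hhi
    have : a = p.1 := by omega
    rw [this]
    simpa using hp
  · intro h
    obtain ⟨h0, hm'⟩ := hfst (a, b) h
    have hjm : (a, b).1.toNat < m := by simp at h0 hm' ⊢; omega
    refine ⟨(a, b), h, ?_, rfl⟩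
    rw [hG (a,b).1.toNat (le_of_lt hjm), hf _ hjm]
    simp; omega

end SB
namespace SB
open Finset

/-! ### RC doubling of an expanded shape -/

noncomputable def Dset (m : ℕ) (f f' : ℕ → ℕ) : Finset ℤ :=
  (Finset.range m).biUnion fun i =>
    Finset.Ico ((G f i : ℤ)) ((G f i : ℤ) + ((f' i - f i : ℕ) : ℤ))

lemma mem_Dset {m : ℕ} {f f' : ℕ → ℕ} {d : ℤ} :
    d ∈ Dset m f f' ↔ ∃ i < m, (G f i : ℤ) ≤ d ∧ d < (G f i : ℤ) + ((f' i - f i : ℕ) : ℤ) := by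
  unfold Dset
  simp only [Finset.mem_biUnion, Finset.mem_range, Finset.mem_Ico]

lemma mem_RCE {S : Finset (ℤ × ℤ)} {D : Finset ℤ} {q : ℤ × ℤ} :
    q ∈ RCE S D ↔ (∃ p ∈ S, q = (p.1 + (wD D p.1 : ℤ), p.2)) ∨
      (∃ p ∈ S, p.1 ∈ D ∧ q = (p.1 + (wD D p.1 : ℤ) + 1, p.2)) := by
  unfold RCE
  simp only [Finset.mem_union, Finset.mem_image, Finset.mem_filter]
  constructor
  · rintro (⟨p, hp, rfl⟩ | ⟨p, ⟨hp, hd⟩, rfl⟩)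
    · exact Or.inl ⟨p, hp, rfl⟩
    · exact Or.inr ⟨p, hp, hd, rfl⟩
  · rintro (⟨p, hp, rfl⟩ | ⟨p, hp, hd, rfl⟩)
    · exact Or.inl ⟨p, hp, rfl⟩
    · exact Or.inr ⟨p, ⟨hp, hd⟩, rfl⟩

section RceStep

variable {K : Finset (ℤ × ℤ)} {m : ℕ} {f f' : ℕ → ℕ}

lemma wD_eval (hm : 0 < m) (h1 : ∀ i < m, 1 ≤ f i) (hle : ∀ i < m, f i ≤ f' i)
    (h2 : ∀ i < m, f' i ≤ 2 * f i) {j : ℕ} (hj : j < m) {r : ℕ} (hr : r < f j) :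
    wD (Dset m f f') ((G f j : ℤ) + (r : ℤ)) =
      (∑ i ∈ Finset.range j, (f' i - f i)) + min r (f' j - f j) := by
  have hδf : ∀ i < m, f' i - f i ≤ f i := fun i hi => by have := h2 i hi; omega
  unfold wD Dset
  rw [Finset.filter_biUnion]
  rw [Finset.card_biUnion]
  · have hterm : ∀ i ∈ Finset.range m,
        ((Finset.Ico ((G f i : ℤ)) ((G f i : ℤ) + ((f' i - f i : ℕ) : ℤ))).filter
          (· < (G f j : ℤ) + (r : ℤ))).card =
        (if i < j then f' i - f i else if i = j then min r (f' j - f j) else 0) := by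
      intro i hi
      rw [Finset.mem_range] at hi
      rw [Finset.Ico_filter_lt, Int.card_Ico]
      by_cases hij : i < j
      · rw [if_pos hij]
        have hb : G f i + (f' i - f i) ≤ G f j := by
          have := G_block_le (f := f) hij
          have := hδf i hi
          omega
        have : min ((G f i : ℤ) + ((f' i - f i : ℕ) : ℤ)) ((G f j : ℤ) + (r : ℤ)) =
            (G f i : ℤ) + ((f' i - f i : ℕ) : ℤ) := by
          apply min_eq_left
          push_cast
          omega
        rw [this]
        omega
      · by_cases hij2 : i = j
        · subst hij2
          rw [if_neg hij, if_pos rfl]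
          omega
        · rw [if_neg hij, if_neg hij2]
          have hji : j < i := by omega
          have hb : G f j + f j ≤ G f i := G_block_le hji
          omega
    rw [Finset.sum_congr rfl hterm]
    rw [← Finset.sum_subset (Finset.range_subset_range.2 (show j + 1 ≤ m by omega))
      (fun i _ hi => by
        rw [Finset.mem_range] at hi
        have h1' : ¬ i < j := by omega
        have h2' : ¬ i = j := by omega
        rw [if_neg h1', if_neg h2'])]
    rw [Finset.sum_range_succ]
    have : ∀ i ∈ Finset.range j,
        (if i < j then f' i - f i else if i = j then min r (f' j - f j) else 0) = f' i - f i := by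
      intro i hi
      rw [Finset.mem_range] at hi
      rw [if_pos hi]
    rw [Finset.sum_congr rfl this]
    rw [if_neg (by omega), if_pos rfl]
  · -- disjointness
    intro i hi i' hi' hne
    rw [Finset.mem_coe, Finset.mem_range] at hi hi'
    apply Finset.disjoint_filter_filter
    rw [Finset.disjoint_left]
    intro x hx hx'
    rw [Finset.mem_Ico] at hx hx'
    rcases Nat.lt_or_ge i i' with h | h
    · have hb : G f i + (f' i - f i) ≤ G f i' := by
        have := G_block_le (f := f) h
        have := hδf i hi
        omega
      omega
    · have h' : i' < i := by omega
      have hb : G f i' + (f' i' - f i') ≤ G f i := by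
        have := G_block_le (f := f) h'
        have := hδf i' hi'
        omega
      omega

lemma K_occupied (hK : K.image Prod.fst = Finset.Icc (0:ℤ) ((m:ℤ)-1)) :
    ∀ i < m, ∃ b, ((i:ℤ), b) ∈ K := by
  intro i hi
  have : (i:ℤ) ∈ K.image Prod.fst := by
    rw [hK, Finset.mem_Icc]
    omega
  obtain ⟨p, hp, hpi⟩ := Finset.mem_image.1 this
  exact ⟨p.2, by rw [← hpi]; simpa using hp⟩

lemma K_fst_bound (hK : K.image Prod.fst = Finset.Icc (0:ℤ) ((m:ℤ)-1)) :
    ∀ p ∈ K, 0 ≤ p.1 ∧ p.1 < (m:ℤ) := by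
  intro p hp
  have : p.1 ∈ K.image Prod.fst := Finset.mem_image_of_mem _ hp
  rw [hK, Finset.mem_Icc] at this
  omega

lemma rce_step (hm : 0 < m) (hK : K.image Prod.fst = Finset.Icc (0:ℤ) ((m:ℤ)-1))
    (h1 : ∀ i < m, 1 ≤ f i) (hle : ∀ i < m, f i ≤ f' i)
    (h2 : ∀ i < m, f' i ≤ 2 * f i) (hne : ∃ i, i < m ∧ f i < f' i) :
    eastAdmissible (ExpandC K f) (Dset m f f') ∧
      RCE (ExpandC K f) (Dset m f f') = ExpandC K f' := by
  have hδf : ∀ i < m, f' i - f i ≤ f i := fun i hi => by have := h2 i hi; omega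
  have hG' : ∀ j ≤ m, G f' j = G f j + ∑ i ∈ Finset.range j, (f' i - f i) := by
    intro j hj
    unfold G
    rw [← Finset.sum_add_distrib]
    apply Finset.sum_congr rfl
    intro i hi
    rw [Finset.mem_range] at hi
    have := hle i (by omega)
    omega
  constructor
  · constructor
    · -- D nonempty
      obtain ⟨i, hi, hlt⟩ := hne
      refine ⟨(G f i : ℤ), mem_Dset.2 ⟨i, hi, le_refl _, ?_⟩⟩
      have : 1 ≤ f' i - f i := by omega
      push_cast
      omega
    · -- all of D occupied in ExpandC K f
      intro d hd
      obtain ⟨i, hi, hd1, hd2⟩ := mem_Dset.1 hd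
      obtain ⟨b, hb⟩ := K_occupied hK i hi
      refine ⟨b, mem_ExpandC.2 ⟨((i:ℤ), b), hb, ⟨?_, ?_⟩, rfl⟩⟩
      · simpa using hd1
      · simp only [Int.toNat_natCast]
        have := hδf i hi
        push_cast at hd2 ⊢
        omega
  · -- the main equality
    ext ⟨a, b⟩
    rw [mem_RCE, mem_ExpandC]
    constructor
    · rintro (⟨p, hp, heq⟩ | ⟨p, hp, hdmem, heq⟩)
      · -- main copy
        obtain ⟨q, hq, ⟨hlo, hhi⟩, hb⟩ := mem_ExpandC.1 (by
          rw [show p = (p.1, p.2) from rfl] at hp; exact hp)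
        obtain ⟨hq0, hqm⟩ := K_fst_bound hK q hq
        have ha : a = p.1 + (wD (Dset m f f') p.1 : ℤ) := congrArg Prod.fst heq
        have hbb : b = p.2 := congrArg Prod.snd heq
        set j := q.1.toNat with hjdef
        have hjm : j < m := by omega
        set r := (p.1 - (G f j : ℤ)).toNat with hrdef
        have hp1 : p.1 = (G f j : ℤ) + (r : ℤ) := by omega
        have hrf : r < f j := by omega
        have hw := wD_eval hm h1 hle h2 hjm hrf
        have hGj := hG' j (le_of_lt hjm)
        refine ⟨q, hq, ⟨?_, ?_⟩, hbb.trans hb⟩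
        · show (G f' j : ℤ) ≤ a
          rw [ha, hp1, hw]
          omega
        · show a < (G f' j : ℤ) + (f' j : ℤ)
          have hff : f j ≤ f' j := hle j hjm
          have hf2 : f' j ≤ 2 * f j := h2 j hjm
          rw [ha, hp1, hw]
          omega
      · -- duplicated copy
        obtain ⟨q, hq, ⟨hlo, hhi⟩, hb⟩ := mem_ExpandC.1 (by
          rw [show p = (p.1, p.2) from rfl] at hp; exact hp)
        obtain ⟨hq0, hqm⟩ := K_fst_bound hK q hq
        have ha : a = p.1 + (wD (Dset m f f') p.1 : ℤ) + 1 := congrArg Prod.fst heq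
        have hbb : b = p.2 := congrArg Prod.snd heq
        set j := q.1.toNat with hjdef
        have hjm : j < m := by omega
        set r := (p.1 - (G f j : ℤ)).toNat with hrdef
        have hp1 : p.1 = (G f j : ℤ) + (r : ℤ) := by omega
        have hrf : r < f j := by omega
        have hw := wD_eval hm h1 hle h2 hjm hrf
        have hGj := hG' j (le_of_lt hjm)
        obtain ⟨i, hi, hd1, hd2⟩ := mem_Dset.1 hdmem
        have hij : i = j := by
          by_contra hne'
          rcases Nat.lt_or_ge i j with h | h
          · have hb1 : G f i + (f' i - f i) ≤ G f j := by
              have := G_block_le (f := f) h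
              have := hδf i hi
              omega
            omega
          · have h' : j < i := by omega
            have hb1 : G f j + f j ≤ G f i := G_block_le h'
            omega
        rw [hij] at hd1 hd2
        have hrδ : r < f' j - f j := by omega
        have hff : f j ≤ f' j := hle j hjm
        have hf2 : f' j ≤ 2 * f j := h2 j hjm
        refine ⟨q, hq, ⟨?_, ?_⟩, hbb.trans hb⟩
        · show (G f' j : ℤ) ≤ a
          rw [ha, hp1, hw]
          omega
        · show a < (G f' j : ℤ) + (f' j : ℤ)
          rw [ha, hp1, hw]
          omega
    · rintro ⟨q, hq, ⟨hlo, hhi⟩, rfl⟩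
      obtain ⟨hq0, hqm⟩ := K_fst_bound hK q hq
      set j := q.1.toNat with hjdef
      have hjm : j < m := by omega
      have hGj := hG' j (le_of_lt hjm)
      set s := (a - (G f' j : ℤ)).toNat with hsdef
      have ha1 : a = (G f' j : ℤ) + (s : ℤ) := by omega
      have hsf : s < f' j := by omega
      have hff : f j ≤ f' j := hle j hjm
      have hf2 : f' j ≤ 2 * f j := h2 j hjm
      by_cases hcase : s < 2 * (f' j - f j)
      · rcases Nat.even_or_odd s with ⟨r, hr⟩ | ⟨r, hr⟩
        · -- main copy of (G f j + r)
          have hrδ : r < f' j - f j := by omega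
          have hrf : r < f j := by omega
          have hw := wD_eval hm h1 hle h2 hjm hrf
          left
          refine ⟨((G f j : ℤ) + (r : ℤ), q.2), mem_ExpandC.2
            ⟨q, hq, ⟨by have e1 : q.1.toNat = j := rfl; rw [e1]; omega,
              by have e1 : q.1.toNat = j := rfl; rw [e1]; omega⟩, rfl⟩, ?_⟩
          apply Prod.ext
          · show a = ((G f j : ℤ) + (r : ℤ)) + (wD (Dset m f f') ((G f j : ℤ) + (r : ℤ)) : ℤ)
            rw [hw, ha1]
            omega
          · rfl
        · -- duplicate copy of (G f j + r)
          have hrδ : r < f' j - f j := by omega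
          have hrf : r < f j := by omega
          have hw := wD_eval hm h1 hle h2 hjm hrf
          right
          refine ⟨((G f j : ℤ) + (r : ℤ), q.2), mem_ExpandC.2
            ⟨q, hq, ⟨by have e1 : q.1.toNat = j := rfl; rw [e1]; omega,
              by have e1 : q.1.toNat = j := rfl; rw [e1]; omega⟩, rfl⟩,
            mem_Dset.2 ⟨j, hjm, by omega, by omega⟩, ?_⟩
          apply Prod.ext
          · show a = ((G f j : ℤ) + (r : ℤ)) + (wD (Dset m f f') ((G f j : ℤ) + (r : ℤ)) : ℤ) + 1
            rw [hw, ha1]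
            omega
          · rfl
      · -- main copy of (G f j + (s - (f' j - f j)))
        set r := s - (f' j - f j) with hrdef
        have hrf : r < f j := by omega
        have hw := wD_eval hm h1 hle h2 hjm hrf
        left
        refine ⟨((G f j : ℤ) + (r : ℤ), q.2), mem_ExpandC.2
          ⟨q, hq, ⟨by have e1 : q.1.toNat = j := rfl; rw [e1]; omega,
              by have e1 : q.1.toNat = j := rfl; rw [e1]; omega⟩, rfl⟩, ?_⟩
        apply Prod.ext
        · show a = ((G f j : ℤ) + (r : ℤ)) + (wD (Dset m f f') ((G f j : ℤ) + (r : ℤ)) : ℤ)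
          rw [hw, ha1]
          omega
        · rfl

end RceStep

end SB
namespace SB
open Finset

/-! ### RCE preserves connectivity -/

lemma adj_symm {u v : ℤ × ℤ} (h : Adj u v) : Adj v u := by unfold Adj at *; omega

lemma wD_succ (D : Finset ℤ) (x : ℤ) :
    wD D (x + 1) = wD D x + (if x ∈ D then 1 else 0) := by
  unfold wD
  by_cases hx : x ∈ D
  · rw [if_pos hx]
    have : D.filter (· < x + 1) = insert x (D.filter (· < x)) := by
      ext z
      simp only [Finset.mem_filter, Finset.mem_insert]
      constructor
      · rintro ⟨hz, hlt⟩
        rcases eq_or_lt_of_le (by omega : z ≤ x) with h | h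
        · exact Or.inl h
        · exact Or.inr ⟨hz, h⟩
      · rintro (rfl | ⟨hz, hlt⟩)
        · exact ⟨hx, by omega⟩
        · exact ⟨hz, by omega⟩
    rw [this, Finset.card_insert_of_notMem (by simp)]
  · rw [if_neg hx]
    have : D.filter (· < x + 1) = D.filter (· < x) := by
      ext z
      simp only [Finset.mem_filter]
      constructor
      · rintro ⟨hz, hlt⟩
        refine ⟨hz, ?_⟩
        rcases eq_or_lt_of_le (by omega : z ≤ x) with h | h
        · subst h; exact absurd hz hx
        · exact h
      · rintro ⟨hz, hlt⟩; exact ⟨hz, by omega⟩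
    rw [this]
    omega

lemma mp_mem_RCE {S : Finset (ℤ × ℤ)} {D : Finset ℤ} {p : ℤ × ℤ} (hp : p ∈ S) :
    (p.1 + (wD D p.1 : ℤ), p.2) ∈ RCE S D :=
  mem_RCE.2 (Or.inl ⟨p, hp, rfl⟩)

lemma dp_mem_RCE {S : Finset (ℤ × ℤ)} {D : Finset ℤ} {p : ℤ × ℤ} (hp : p ∈ S)
    (hd : p.1 ∈ D) : (p.1 + (wD D p.1 : ℤ) + 1, p.2) ∈ RCE S D :=
  mem_RCE.2 (Or.inr ⟨p, hp, hd, rfl⟩)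

lemma RCE_nonempty {S : Finset (ℤ × ℤ)} {D : Finset ℤ} (h : S.Nonempty) :
    (RCE S D).Nonempty := by
  obtain ⟨p, hp⟩ := h
  exact ⟨_, mp_mem_RCE (D := D) hp⟩

lemma RCE_connected {S : Finset (ℤ × ℤ)} {D : Finset ℤ} (hc : ShapeConnected S) :
    ShapeConnected (RCE S D) := by
  set rel := fun x y : ℤ × ℤ => x ∈ RCE S D ∧ y ∈ RCE S D ∧ Adj x y with hrel
  set mp := fun p : ℤ × ℤ => (p.1 + (wD D p.1 : ℤ), p.2) with hmp
  have hstep : ∀ a b : ℤ × ℤ, a ∈ S → b ∈ S → Adj a b →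
      Relation.ReflTransGen rel (mp a) (mp b) := by
    intro a b ha hb hadj
    rcases adj_iff.1 hadj with ⟨h1, h2⟩ | ⟨h1, h2⟩
    · -- vertical
      refine Relation.ReflTransGen.single ⟨mp_mem_RCE ha, mp_mem_RCE hb, ?_⟩
      apply adj_iff.2
      left
      constructor
      · simp [hmp, h1]
      · simpa [hmp] using h2
    · -- horizontal
      rcases h2 with h2 | h2
      · -- a.1 = b.1 + 1
        have hw := wD_succ D b.1
        rw [← h2] at hw
        by_cases hd : b.1 ∈ D
        · rw [if_pos hd] at hw
          have s2 : rel (mp a) (b.1 + (wD D b.1 : ℤ) + 1, b.2) := by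
            refine ⟨mp_mem_RCE ha, dp_mem_RCE hb hd, ?_⟩
            apply adj_iff.2
            right
            constructor
            · simp [hmp, h1]
            · left; simp [hmp]; omega
          have s1 : rel (b.1 + (wD D b.1 : ℤ) + 1, b.2) (mp b) := by
            refine ⟨dp_mem_RCE hb hd, mp_mem_RCE hb, ?_⟩
            apply adj_iff.2
            right
            constructor
            · simp [hmp]
            · left; simp [hmp]
          exact (Relation.ReflTransGen.single s1).head s2
        · rw [if_neg hd] at hw
          refine Relation.ReflTransGen.single ⟨mp_mem_RCE ha, mp_mem_RCE hb, ?_⟩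
          apply adj_iff.2
          right
          constructor
          · simp [hmp, h1]
          · left; simp [hmp]; omega
      · -- a.1 + 1 = b.1
        have hw := wD_succ D a.1
        rw [h2] at hw
        by_cases hd : a.1 ∈ D
        · rw [if_pos hd] at hw
          have s1 : rel (mp a) (a.1 + (wD D a.1 : ℤ) + 1, a.2) :=
            ⟨mp_mem_RCE ha, dp_mem_RCE ha hd, by apply adj_iff.2; right; simp [hmp]⟩
          have s2 : rel (a.1 + (wD D a.1 : ℤ) + 1, a.2) (mp b) := by
            refine ⟨dp_mem_RCE ha hd, mp_mem_RCE hb, ?_⟩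
            apply adj_iff.2
            right
            constructor
            · simp [hmp, h1]
            · right; simp [hmp]; omega
          exact (Relation.ReflTransGen.single s2).head s1
        · rw [if_neg hd] at hw
          refine Relation.ReflTransGen.single ⟨mp_mem_RCE ha, mp_mem_RCE hb, ?_⟩
          apply adj_iff.2
          right
          constructor
          · simp [hmp, h1]
          · right; simp [hmp]; omega
  have hlift : ∀ p q : ℤ × ℤ,
      Relation.ReflTransGen (fun a b => a ∈ S ∧ b ∈ S ∧ Adj a b) p q →
      Relation.ReflTransGen rel (mp p) (mp q) := by
    intro p q h
    induction h with
    | refl => exact Relation.ReflTransGen.refl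
    | tail _ hs ih => exact ih.trans (hstep _ _ hs.1 hs.2.1 hs.2.2)
  intro u hu v hv
  rcases mem_RCE.1 hu with ⟨p, hp, rfl⟩ | ⟨p, hp, hpd, rfl⟩ <;>
    rcases mem_RCE.1 hv with ⟨q, hq, rfl⟩ | ⟨q, hq, hqd, rfl⟩
  · exact hlift p q (hc p hp q hq)
  · exact (hlift p q (hc p hp q hq)).tail
      ⟨mp_mem_RCE hq, dp_mem_RCE hq hqd, by apply adj_iff.2; right; simp [hmp]⟩
  · exact (hlift p q (hc p hp q hq)).head
      ⟨dp_mem_RCE hp hpd, mp_mem_RCE hp, by apply adj_iff.2; right; simp⟩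
  · exact (((hlift p q (hc p hp q hq)).head
      ⟨dp_mem_RCE hp hpd, mp_mem_RCE hp, by apply adj_iff.2; right; simp [hmp]⟩).tail
      ⟨mp_mem_RCE hq, dp_mem_RCE hq hqd, by apply adj_iff.2; right; simp [hmp]⟩)

/-! ### Halving schedule -/

def halve (a : ℕ) : ℕ := (a + 1) / 2

def hIter (s : ℕ) (a : ℕ) : ℕ := halve^[s] a

lemma hIter_zero (a : ℕ) : hIter 0 a = a := rfl

lemma hIter_succ' (s a : ℕ) : hIter (s + 1) a = halve (hIter s a) :=
  Function.iterate_succ_apply' halve s a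

lemma hIter_succ (s a : ℕ) : hIter (s + 1) a = hIter s (halve a) :=
  Function.iterate_succ_apply halve s a

lemma hIter_pos {a : ℕ} (ha : 1 ≤ a) (s : ℕ) : 1 ≤ hIter s a := by
  induction s with
  | zero => simpa [hIter_zero]
  | succ n ih => rw [hIter_succ']; unfold halve; omega

lemma hIter_one : ∀ s, hIter s 1 = 1 := by
  intro s
  induction s with
  | zero => rfl
  | succ n ih => rw [hIter_succ', ih]; rfl

lemma hIter_eq_one {a : ℕ} (ha : 1 ≤ a) : ∀ s, a ≤ 2 ^ s → hIter s a = 1 := by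
  induction a using Nat.strong_induction_on with
  | _ a ih => ?_
  intro s hs
  match s with
  | 0 => simp at hs; rw [hIter_zero]; omega
  | s + 1 =>
    rw [hIter_succ]
    have h2 : (2:ℕ) ^ (s+1) = 2 * 2 ^ s := by ring
    rcases Nat.eq_or_lt_of_le ha with h | h
    · have : halve a = 1 := by unfold halve; omega
      rw [this]
      exact hIter_one s
    · have hlt : halve a < a := by unfold halve; omega
      have h1 : 1 ≤ halve a := by unfold halve; omega
      exact ih (halve a) hlt h1 s (by unfold halve; omega)

lemma hIter_ge_two {a : ℕ} : ∀ s, 2 ^ s < a → 2 ≤ hIter s a := by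
  intro s
  induction s generalizing a with
  | zero => intro h; rw [hIter_zero]; simp at h; omega
  | succ n ih =>
      intro h
      rw [hIter_succ]
      apply ih
      have h2 : (2:ℕ) ^ (n+1) = 2 * 2 ^ n := by ring
      unfold halve
      omega

/-! ### The east chain step -/

lemma main_east_step (V : Finset (ℤ × ℤ)) (hV : V.Nonempty) (hc : ShapeConnected V)
    (hm1 : 0 < mC V)
    (hK : (KC V).image Prod.fst = Finset.Icc (0:ℤ) ((mC V : ℤ) - 1))
    (hMpos : ∀ i < mC V, 1 ≤ MC V i) :
    ∀ t < Nat.clog 2 ((Finset.range (mC V)).sup (MC V)), ∃ D : Finset ℤ,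
      eastAdmissible (ExpandC (KC V)
        (fun i => hIter (Nat.clog 2 ((Finset.range (mC V)).sup (MC V)) - t) (MC V i))) D ∧
      ExpandC (KC V)
        (fun i => hIter (Nat.clog 2 ((Finset.range (mC V)).sup (MC V)) - (t+1)) (MC V i)) =
        RCE (ExpandC (KC V)
          (fun i => hIter (Nat.clog 2 ((Finset.range (mC V)).sup (MC V)) - t) (MC V i))) D := by
  set Mmax := (Finset.range (mC V)).sup (MC V) with hMmax
  set T := Nat.clog 2 Mmax with hT
  intro t ht
  have hTt : T - t = (T - t - 1) + 1 := by omega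
  have hhalve : ∀ x : ℕ, hIter (T - t) x = halve (hIter (T - t - 1) x) := by
    intro x
    conv_lhs => rw [hTt]
    rw [hIter_succ']
  have h1 : ∀ i < mC V, 1 ≤ hIter (T - t) (MC V i) := fun i hi => hIter_pos (hMpos i hi) _
  have hle : ∀ i < mC V, hIter (T - t) (MC V i) ≤ hIter (T - t - 1) (MC V i) := by
    intro i hi
    rw [hhalve]
    have := hIter_pos (hMpos i hi) (T - t - 1)
    unfold halve
    omega
  have h2 : ∀ i < mC V, hIter (T - t - 1) (MC V i) ≤ 2 * hIter (T - t) (MC V i) := by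
    intro i hi
    rw [hhalve]
    unfold halve
    omega
  have hne : ∃ i, i < mC V ∧ hIter (T - t) (MC V i) < hIter (T - t - 1) (MC V i) := by
    have hrne : (Finset.range (mC V)).Nonempty := ⟨0, Finset.mem_range.2 hm1⟩
    obtain ⟨i, hi, hieq⟩ := Finset.exists_mem_eq_sup (Finset.range (mC V)) hrne (MC V)
    rw [Finset.mem_range] at hi
    refine ⟨i, hi, ?_⟩
    have hMi : MC V i = Mmax := hieq.symm
    have hMmax2 : 2 ≤ Mmax := by
      by_contra hcon
      push_neg at hcon
      have h0 : T = 0 := by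
        rw [hT]
        exact Nat.clog_of_right_le_one (by omega) 2
      omega
    have hge2 : 2 ≤ hIter (T - t - 1) (MC V i) := by
      apply hIter_ge_two
      rw [hMi]
      have hplt := Nat.pow_pred_clog_lt_self (b := 2) one_lt_two (show 1 < Mmax by omega)
      have hmono : (2:ℕ) ^ (T - t - 1) ≤ 2 ^ (T - 1) :=
        Nat.pow_le_pow_right (by norm_num) (by omega)
      calc (2:ℕ) ^ (T - t - 1) ≤ 2 ^ (T - 1) := hmono
      _ = 2 ^ (Nat.clog 2 Mmax).pred := by rw [hT, Nat.pred_eq_sub_one]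
      _ < Mmax := hplt
    rw [hhalve]
    unfold halve
    omega
  obtain ⟨hadm, heq⟩ := rce_step (K := KC V) (m := mC V)
    (f := fun i => hIter (T - t) (MC V i)) (f' := fun i => hIter (T - t - 1) (MC V i))
    hm1 hK h1 hle h2 hne
  refine ⟨Dset (mC V) (fun i => hIter (T - t) (MC V i)) (fun i => hIter (T - t - 1) (MC V i)),
    hadm, ?_⟩
  have hsub : T - (t + 1) = T - t - 1 := by omega
  rw [hsub]
  exact heq.symm

/-! ### The east chain lemma -/

lemma main_east (V : Finset (ℤ × ℤ)) (hV : V.Nonempty) (hc : ShapeConnected V) :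
    ∃ k ≤ Nat.clog 2 V.card, ∃ A : ℕ → Finset (ℤ × ℤ),
      A 0 = KC V ∧ A k = translateSh (-xmin V, 0) V ∧
      (∀ i, (A i).Nonempty ∧ ShapeConnected (A i)) ∧
      (∀ i < k, ∃ D : Finset ℤ, eastAdmissible (A i) D ∧ A (i + 1) = RCE (A i) D) := by
  have hm1 : 0 < mC V := by unfold mC; omega
  have hK : (KC V).image Prod.fst = Finset.Icc (0:ℤ) ((mC V : ℤ) - 1) := KC_image_fst V hV hc
  have hMpos : ∀ i < mC V, 1 ≤ MC V i := fun i hi => MC_pos V hV hc hi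
  set Mmax := (Finset.range (mC V)).sup (MC V) with hMmax
  set T := Nat.clog 2 Mmax with hT
  have hMle : ∀ i < mC V, MC V i ≤ Mmax := fun i hi => Finset.le_sup (Finset.mem_range.2 hi)
  have hMmax_le : Mmax ≤ 2 ^ T := Nat.le_pow_clog one_lt_two _
  refine ⟨T, ?_, fun t => ExpandC (KC V) (fun i => hIter (T - t) (MC V i)), ?_, ?_, ?_, ?_⟩
  · -- T ≤ clog 2 card
    apply Nat.clog_mono_right
    apply Finset.sup_le
    intro i _
    exact MC_le_card V i
  · -- A 0 = KC V
    apply expandC_one (KC V) (mC V) hK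
    intro i hi
    exact hIter_eq_one (hMpos i hi) T (le_trans (hMle i hi) hMmax_le)
  · -- A T = translate
    show ExpandC (KC V) (fun i => hIter (T - T) (MC V i)) = _
    have : (fun i => hIter (T - T) (MC V i)) = MC V := by
      funext i
      rw [Nat.sub_self, hIter_zero]
    rw [this]
    exact expandC_KC V hV hc
  · -- nonempty and connected
    have hstep : ∀ t < T, ∃ D : Finset ℤ,
        eastAdmissible (ExpandC (KC V) (fun i => hIter (T - t) (MC V i))) D ∧
        ExpandC (KC V) (fun i => hIter (T - (t+1)) (MC V i)) =
          RCE (ExpandC (KC V) (fun i => hIter (T - t) (MC V i))) D :=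
      main_east_step V hV hc hm1 hK hMpos
    have hchain : ∀ t, t ≤ T →
        (ExpandC (KC V) (fun i => hIter (T - t) (MC V i))).Nonempty ∧
        ShapeConnected (ExpandC (KC V) (fun i => hIter (T - t) (MC V i))) := by
      intro t
      induction t with
      | zero =>
          intro _
          have h0 : ExpandC (KC V) (fun i => hIter (T - 0) (MC V i)) = KC V := by
            apply expandC_one (KC V) (mC V) hK
            intro i hi
            exact hIter_eq_one (hMpos i hi) T (le_trans (hMle i hi) hMmax_le)
          rw [h0]
          exact ⟨KC_nonempty hV, KC_connected hc⟩
      | succ n ih =>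
          intro hn
          obtain ⟨hne', hc'⟩ := ih (by omega)
          obtain ⟨D, hadm, heq⟩ := hstep n (by omega)
          rw [heq]
          exact ⟨RCE_nonempty hne', RCE_connected hc'⟩
    intro i
    by_cases hi : i ≤ T
    · exact hchain i hi
    · have h1 : T - i = 0 := by omega
      have h2 : T - T = 0 := by omega
      show (ExpandC (KC V) fun j => hIter (T - i) (MC V j)).Nonempty ∧
        ShapeConnected (ExpandC (KC V) fun j => hIter (T - i) (MC V j))
      rw [h1, ← h2]
      exact hchain T (le_refl T)
  · -- the steps
    exact main_east_step V hV hc hm1 hK hMpos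

end SB
namespace SB
open Finset

/-! ### rows and swap -/

lemma mem_rowS {S : Finset (ℤ × ℤ)} {x y : ℤ} : x ∈ rowS S y ↔ (x, y) ∈ S := by
  unfold rowS
  simp only [Finset.mem_image, Finset.mem_filter]
  constructor
  · rintro ⟨p, ⟨hp, hy⟩, hx⟩
    have : p = (x, y) := by cases p; simp_all
    rwa [this] at hp
  · intro h; exact ⟨(x, y), ⟨h, rfl⟩, rfl⟩

lemma colS_swap (S : Finset (ℤ × ℤ)) (x : ℤ) : colS (swapSh S) x = rowS S x := by
  ext y
  rw [mem_colS, mem_rowS, mem_swapSh]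
  exact Iff.rfl

lemma image_fst_swap (S : Finset (ℤ × ℤ)) : (swapSh S).image Prod.fst = S.image Prod.snd := by
  unfold swapSh
  rw [Finset.image_image]
  rfl

lemma image_snd_swap (S : Finset (ℤ × ℤ)) : (swapSh S).image Prod.snd = S.image Prod.fst := by
  unfold swapSh
  rw [Finset.image_image]
  rfl

lemma xmin_swap (S : Finset (ℤ × ℤ)) : xmin (swapSh S) = ymin S := by
  unfold xmin ymin
  rw [image_fst_swap]

lemma ymin_swap (S : Finset (ℤ × ℤ)) : ymin (swapSh S) = xmin S := by
  unfold xmin ymin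
  rw [image_snd_swap]

lemma phiC_swap (S : Finset (ℤ × ℤ)) (y : ℤ) : phiC (swapSh S) y = phiR S y := by
  unfold phiC phiR
  rw [xmin_swap]
  congr 1
  apply Finset.filter_congr
  intro z _
  simp [colS_swap]

lemma mem_KR {S : Finset (ℤ × ℤ)} {q : ℤ × ℤ} :
    q ∈ KR S ↔ ∃ p ∈ S, q = (p.1, (phiR S p.2 : ℤ)) := by
  unfold KR
  simp only [Finset.mem_image]
  constructor
  · rintro ⟨p, hp, rfl⟩; exact ⟨p, hp, rfl⟩
  · rintro ⟨p, hp, rfl⟩; exact ⟨p, hp, rfl⟩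

lemma KR_eq_swap (S : Finset (ℤ × ℤ)) : KR S = swapSh (KC (swapSh S)) := by
  ext q
  rw [mem_KR, mem_swapSh, mem_KC]
  constructor
  · rintro ⟨p, hp, rfl⟩
    refine ⟨p.swap, mem_swapSh.2 (by simpa using hp), ?_⟩
    simp [Prod.swap, phiC_swap]
  · rintro ⟨p, hp, hq⟩
    refine ⟨p.swap, by simpa using mem_swapSh.1 hp, ?_⟩
    have : q = ((phiC (swapSh S) p.1 : ℤ), p.2).swap := by
      rw [← hq]; simp
    rw [this]
    simp [Prod.swap, phiC_swap]

lemma mem_RCN {S : Finset (ℤ × ℤ)} {D : Finset ℤ} {q : ℤ × ℤ} :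
    q ∈ RCN S D ↔ (∃ p ∈ S, q = (p.1, p.2 + (wD D p.2 : ℤ))) ∨
      (∃ p ∈ S, p.2 ∈ D ∧ q = (p.1, p.2 + (wD D p.2 : ℤ) + 1)) := by
  unfold RCN
  simp only [Finset.mem_union, Finset.mem_image, Finset.mem_filter]
  constructor
  · rintro (⟨p, hp, rfl⟩ | ⟨p, ⟨hp, hd⟩, rfl⟩)
    · exact Or.inl ⟨p, hp, rfl⟩
    · exact Or.inr ⟨p, hp, hd, rfl⟩
  · rintro (⟨p, hp, rfl⟩ | ⟨p, hp, hd, rfl⟩)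
    · exact Or.inl ⟨p, hp, rfl⟩
    · exact Or.inr ⟨p, ⟨hp, hd⟩, rfl⟩

lemma RCN_swap (T : Finset (ℤ × ℤ)) (D : Finset ℤ) :
    RCN (swapSh T) D = swapSh (RCE T D) := by
  ext q
  rw [mem_RCN, mem_swapSh, mem_RCE]
  constructor
  · rintro (⟨p, hp, rfl⟩ | ⟨p, hp, hd, rfl⟩)
    · left
      exact ⟨p.swap, by simpa using mem_swapSh.1 hp, by simp [Prod.swap]⟩
    · right
      exact ⟨p.swap, by simpa using mem_swapSh.1 hp, by simpa [Prod.swap] using hd,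
        by simp [Prod.swap]⟩
  · rintro (⟨p, hp, hq⟩ | ⟨p, hp, hd, hq⟩)
    · left
      refine ⟨p.swap, mem_swapSh.2 (by simpa using hp), ?_⟩
      have : q = (p.1 + (wD D p.1 : ℤ), p.2).swap := by rw [← hq]; simp
      rw [this]
      simp [Prod.swap]
    · right
      refine ⟨p.swap, mem_swapSh.2 (by simpa using hp), by simpa [Prod.swap] using hd, ?_⟩
      have : q = (p.1 + (wD D p.1 : ℤ) + 1, p.2).swap := by rw [← hq]; simp
      rw [this]
      simp [Prod.swap]

lemma northAdmissible_swap {T : Finset (ℤ × ℤ)} {D : Finset ℤ}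
    (h : eastAdmissible T D) : northAdmissible (swapSh T) D := by
  obtain ⟨hne, hocc⟩ := h
  refine ⟨hne, ?_⟩
  intro d hd
  obtain ⟨y, hy⟩ := hocc d hd
  exact ⟨y, mem_swapSh.2 (by simpa using hy)⟩

/-! ### Translation lemmas -/

lemma mem_translateSh {v : ℤ × ℤ} {S : Finset (ℤ × ℤ)} {q : ℤ × ℤ} :
    q ∈ translateSh v S ↔ (q.1 - v.1, q.2 - v.2) ∈ S := by
  unfold translateSh
  simp only [Finset.mem_image]
  constructor
  · rintro ⟨p, hp, rfl⟩
    simpa using hp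
  · intro h
    exact ⟨(q.1 - v.1, q.2 - v.2), h, by simp⟩

lemma translate_translate (v w : ℤ × ℤ) (S : Finset (ℤ × ℤ)) :
    translateSh v (translateSh w S) = translateSh (w.1 + v.1, w.2 + v.2) S := by
  unfold translateSh
  rw [Finset.image_image]
  apply Finset.image_congr
  intro p _
  simp
  constructor <;> ring

lemma translate_zero (S : Finset (ℤ × ℤ)) : translateSh (0, 0) S = S := by
  ext q
  rw [mem_translateSh]
  simp

lemma card_translateSh (v : ℤ × ℤ) (S : Finset (ℤ × ℤ)) :
    (translateSh v S).card = S.card := by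
  unfold translateSh
  apply Finset.card_image_of_injective
  intro p q h
  simp only [Prod.mk.injEq] at h
  exact Prod.ext (by omega) (by omega)

lemma translate_nonempty {v : ℤ × ℤ} {S : Finset (ℤ × ℤ)} (h : S.Nonempty) :
    (translateSh v S).Nonempty := h.image _

lemma translate_connected {v : ℤ × ℤ} {S : Finset (ℤ × ℤ)} (h : ShapeConnected S) :
    ShapeConnected (translateSh v S) := by
  intro u hu vv hvv
  have hu' := mem_translateSh.1 hu
  have hv' := mem_translateSh.1 hvv
  have main : ∀ a b : ℤ × ℤ,
      Relation.ReflTransGen (fun a b => a ∈ S ∧ b ∈ S ∧ Adj a b) a b →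
      Relation.ReflTransGen (fun a b => a ∈ translateSh v S ∧ b ∈ translateSh v S ∧ Adj a b)
        (a.1 + v.1, a.2 + v.2) (b.1 + v.1, b.2 + v.2) := by
    intro a b hab
    induction hab with
    | refl => exact Relation.ReflTransGen.refl
    | tail _ hs ih =>
        refine ih.tail ⟨mem_translateSh.2 (by simpa using hs.1),
          mem_translateSh.2 (by simpa using hs.2.1), ?_⟩
        have := hs.2.2
        unfold Adj at *
        simp only at *
        omega
  have hm := main _ _ (h _ hu' _ hv')
  simp only at hm
  have e1 : (u.1 - v.1 + v.1, u.2 - v.2 + v.2) = u := by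
    apply Prod.ext <;> simp
  have e2 : (vv.1 - v.1 + v.1, vv.2 - v.2 + v.2) = vv := by
    apply Prod.ext <;> simp
  rwa [e1, e2] at hm

lemma image_fst_translate_y (c : ℤ) (S : Finset (ℤ × ℤ)) :
    (translateSh (0, c) S).image Prod.fst = S.image Prod.fst := by
  unfold translateSh
  rw [Finset.image_image]
  apply Finset.image_congr
  intro p _
  simp

lemma xmin_translate_y (c : ℤ) (S : Finset (ℤ × ℤ)) :
    xmin (translateSh (0, c) S) = xmin S := by
  unfold xmin
  rw [image_fst_translate_y]

lemma ymin_le' {S : Finset (ℤ × ℤ)} {p : ℤ × ℤ} (hp : p ∈ S) : ymin S ≤ p.2 := by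
  have := xmin_le (S := swapSh S) (p := p.swap) (mem_swapSh.2 (by simpa using hp))
  rwa [xmin_swap] at this

lemma exists_ymin' {S : Finset (ℤ × ℤ)} (hS : S.Nonempty) : ∃ x, (x, ymin S) ∈ S := by
  obtain ⟨y, hy⟩ := exists_xmin (swapSh_nonempty hS)
  rw [xmin_swap] at hy
  exact ⟨y, by simpa [Prod.swap] using mem_swapSh.1 hy⟩

lemma ymin_translate_y {c : ℤ} {S : Finset (ℤ × ℤ)} (hS : S.Nonempty) :
    ymin (translateSh (0, c) S) = ymin S + c := by
  apply le_antisymm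
  · obtain ⟨x, hx⟩ := exists_ymin' hS
    have : (x, ymin S + c) ∈ translateSh (0, c) S := by
      rw [mem_translateSh]
      simpa using hx
    simpa using ymin_le' this
  · obtain ⟨x, hx⟩ := exists_ymin' (translate_nonempty (v := ((0:ℤ), c)) hS)
    have := mem_translateSh.1 hx
    have h2 := ymin_le' this
    simp only at h2
    omega

lemma colS_translate_y (c : ℤ) (S : Finset (ℤ × ℤ)) (x : ℤ) :
    colS (translateSh (0, c) S) x = (colS S x).image (· + c) := by
  ext y
  rw [mem_colS]
  rw [mem_translateSh]
  simp only [Finset.mem_image]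
  constructor
  · intro h
    exact ⟨y - c, mem_colS.2 (by simpa using h), by ring⟩
  · rintro ⟨z, hz, rfl⟩
    have := mem_colS.1 hz
    simpa using this

lemma image_addc_inj {A B : Finset ℤ} {c : ℤ} :
    A.image (· + c) = B.image (· + c) ↔ A = B := by
  constructor
  · intro h
    have : (A.image (· + c)).image (· + (-c)) = (B.image (· + c)).image (· + (-c)) := by
      rw [h]
    rw [Finset.image_image, Finset.image_image] at this
    simpa using this
  · intro h; rw [h]

lemma phiC_translate_y (c : ℤ) (S : Finset (ℤ × ℤ)) (x : ℤ) :
    phiC (translateSh (0, c) S) x = phiC S x := by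
  unfold phiC
  rw [xmin_translate_y]
  congr 1
  apply Finset.filter_congr
  intro z _
  simp only [colS_translate_y, ne_eq]
  rw [image_addc_inj]

lemma KC_translate_y (c : ℤ) (S : Finset (ℤ × ℤ)) :
    KC (translateSh (0, c) S) = translateSh (0, c) (KC S) := by
  ext q
  rw [mem_KC, mem_translateSh, mem_KC]
  constructor
  · rintro ⟨p, hp, rfl⟩
    have hp' := mem_translateSh.1 hp
    refine ⟨(p.1, p.2 - c), by simpa using hp', ?_⟩
    simp [phiC_translate_y]
  · rintro ⟨p, hp, hq⟩
    refine ⟨(p.1, p.2 + c), mem_translateSh.2 (by simpa using hp), ?_⟩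
    have h1 : q.1 = (phiC S p.1 : ℤ) := by
      have := congrArg Prod.fst hq
      simpa using this
    have h2 : q.2 - c = p.2 := by
      have := congrArg Prod.snd hq
      simpa using this
    apply Prod.ext
    · simpa [phiC_translate_y] using h1
    · simp; omega

lemma rowS_translate_y (c : ℤ) (S : Finset (ℤ × ℤ)) (y : ℤ) :
    rowS (translateSh (0, c) S) y = rowS S (y - c) := by
  ext x
  rw [mem_rowS, mem_rowS, mem_translateSh]
  simp

lemma phiR_translate_y {c : ℤ} {S : Finset (ℤ × ℤ)} (hS : S.Nonempty) (y : ℤ) :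
    phiR (translateSh (0, c) S) (y + c) = phiR S y := by
  unfold phiR
  rw [ymin_translate_y hS]
  apply Finset.card_bij' (fun z _ => z - c) (fun z _ => z + c)
  · intro z hz
    rw [Finset.mem_filter, Finset.mem_Icc] at *
    obtain ⟨⟨h1, h2⟩, h3⟩ := hz
    refine ⟨⟨by omega, by omega⟩, ?_⟩
    rw [rowS_translate_y, rowS_translate_y] at h3
    rw [show z - c - 1 = z - 1 - c from by ring]
    exact h3
  · intro z hz
    rw [Finset.mem_filter, Finset.mem_Icc] at *
    obtain ⟨⟨h1, h2⟩, h3⟩ := hz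
    refine ⟨⟨by omega, by omega⟩, ?_⟩
    rw [rowS_translate_y, rowS_translate_y]
    simp only [add_sub_cancel_right]
    rw [show z + c - 1 - c = z - 1 from by ring]
    exact h3
  · intro z _; ring
  · intro z _; ring

lemma KR_translate_y {c : ℤ} {S : Finset (ℤ × ℤ)} (hS : S.Nonempty) :
    KR (translateSh (0, c) S) = KR S := by
  ext q
  rw [mem_KR, mem_KR]
  constructor
  · rintro ⟨p, hp, rfl⟩
    have hp' := mem_translateSh.1 hp
    refine ⟨(p.1, p.2 - c), by simpa using hp', ?_⟩
    have e : p.2 = (p.2 - c) + c := by ring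
    apply Prod.ext
    · simp
    · show (phiR (translateSh (0, c) S) p.2 : ℤ) = (phiR S ((p.1, p.2 - c) : ℤ × ℤ).2 : ℤ)
      rw [e, phiR_translate_y hS]
      have e2 : p.2 - c + c - c = p.2 - c := by ring
      rw [e2]
  · rintro ⟨p, hp, rfl⟩
    refine ⟨(p.1, p.2 + c), mem_translateSh.2 (by simpa using hp), ?_⟩
    apply Prod.ext
    · simp
    · show (phiR S p.2 : ℤ) = (phiR (translateSh (0, c) S) (p.2 + c) : ℤ)
      rw [phiR_translate_y hS]

lemma Baseline_translate_y {c : ℤ} {S : Finset (ℤ × ℤ)} (hS : S.Nonempty) :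
    Baseline (translateSh (0, c) S) = Baseline S := by
  unfold Baseline
  rw [KC_translate_y]
  exact KR_translate_y (KC_nonempty hS)

end SB
namespace SB
open Finset

/-! ### Building a connected shape by node additions -/

lemma singleton_connected (p : ℤ × ℤ) : ShapeConnected ({p} : Finset (ℤ × ℤ)) := by
  intro u hu v hv
  rw [Finset.mem_singleton] at hu hv
  subst hu; subst hv
  exact Relation.ReflTransGen.refl

lemma connected_insert {T : Finset (ℤ × ℤ)} (hcT : ShapeConnected T) {a b : ℤ × ℤ}
    (haT : a ∈ T) (hadj : Adj a b) : ShapeConnected (insert b T) := by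
  have hmono : ∀ u v, Relation.ReflTransGen (fun x y => x ∈ T ∧ y ∈ T ∧ Adj x y) u v →
      Relation.ReflTransGen (fun x y => x ∈ insert b T ∧ y ∈ insert b T ∧ Adj x y) u v :=
    fun u v h => Relation.ReflTransGen.mono (r := fun x y => x ∈ T ∧ y ∈ T ∧ Adj x y)
      (p := fun x y => x ∈ insert b T ∧ y ∈ insert b T ∧ Adj x y)
      (fun x y hxy => ⟨Finset.mem_insert_of_mem hxy.1, Finset.mem_insert_of_mem hxy.2.1,
        hxy.2.2⟩) u v h
  intro u hu v hv
  rcases Finset.mem_insert.1 hu with rfl | huT <;> rcases Finset.mem_insert.1 hv with h | hvT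
  · rw [h]
  · exact (hmono _ _ (hcT a haT v hvT)).head
      ⟨Finset.mem_insert_self _ _, Finset.mem_insert_of_mem haT, adj_symm hadj⟩
  · subst h
    exact (hmono _ _ (hcT u huT a haT)).tail
      ⟨Finset.mem_insert_of_mem haT, Finset.mem_insert_self _ _, hadj⟩
  · exact hmono _ _ (hcT u huT v hvT)

lemma exists_boundary {B T : Finset (ℤ × ℤ)} (hTB : T ⊆ B) (hcB : ShapeConnected B)
    (hu : T.Nonempty) (hv : ∃ v ∈ B, v ∉ T) :
    ∃ a ∈ T, ∃ b ∈ B, b ∉ T ∧ Adj a b := by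
  obtain ⟨u, huT⟩ := hu
  obtain ⟨v, hvB, hvT⟩ := hv
  have hpath := hcB u (hTB huT) v hvB
  revert huT
  refine Relation.ReflTransGen.head_induction_on hpath ?_ ?_
  · intro huT; exact absurd huT hvT
  · intro a c hrel _ ih haT
    by_cases hcT : c ∈ T
    · exact ih hcT
    · exact ⟨a, haT, c, hrel.2.1, hcT, hrel.2.2⟩

lemma addstep_insert {T : Finset (ℤ × ℤ)} {a b : ℤ × ℤ} (haT : a ∈ T) (hadj : Adj a b) :
    AddStep T (insert b T) := by
  refine ⟨(b.1 - a.1, b.2 - a.2), ?_, Finset.subset_insert _ _, ?_⟩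
  · unfold dirs
    simp only [Finset.mem_insert, Finset.mem_singleton, Prod.mk.injEq]
    unfold Adj at hadj
    omega
  · intro x hx
    rcases Finset.mem_insert.1 hx with rfl | hxT
    · apply Finset.mem_union_right
      refine Finset.mem_image.2 ⟨a, haT, ?_⟩
      apply Prod.ext <;> simp
    · exact Finset.mem_union_left _ hxT

lemma addchain_aux {B : Finset (ℤ × ℤ)} (hcB : ShapeConnected B) :
    ∀ k : ℕ, ∀ T : Finset (ℤ × ℤ), T ⊆ B → T.Nonempty → ShapeConnected T →
    B.card - T.card = k →
    ∃ A : ℕ → Finset (ℤ × ℤ), A 0 = T ∧ A k = B ∧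
      (∀ i ≤ k, (A i).Nonempty ∧ ShapeConnected (A i)) ∧
      (∀ i < k, AddStep (A i) (A (i + 1))) := by
  intro k
  induction k with
  | zero =>
      intro T hTB hTne hTc hcard
      have hle : T.card ≤ B.card := Finset.card_le_card hTB
      have : T = B := Finset.eq_of_subset_of_card_le hTB (by omega)
      subst this
      exact ⟨fun _ => T, rfl, rfl, fun i _ => ⟨hTne, hTc⟩, fun i hi => absurd hi (by omega)⟩
  | succ k ih =>
      intro T hTB hTne hTc hcard
      have hle : T.card ≤ B.card := Finset.card_le_card hTB
      have hv : ∃ v ∈ B, v ∉ T := by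
        by_contra hcon
        push_neg at hcon
        have : B ⊆ T := hcon
        have := Finset.card_le_card this
        omega
      obtain ⟨a, haT, b, hbB, hbT, hadj⟩ := exists_boundary hTB hcB hTne hv
      have hcard' : (insert b T).card = T.card + 1 := Finset.card_insert_of_notMem hbT
      have hsub' : insert b T ⊆ B := Finset.insert_subset hbB hTB
      obtain ⟨A', hA0, hAk, hAinv, hAstep⟩ := ih (insert b T) hsub'
        (Finset.insert_nonempty _ _) (connected_insert hTc haT hadj)
        (by have := Finset.card_le_card hsub'; omega)
      refine ⟨fun i => if i = 0 then T else A' (i - 1), by simp, ?_, ?_, ?_⟩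
      · simp only [Nat.succ_ne_zero, if_neg]
        simpa using hAk
      · intro i hi
        by_cases h0 : i = 0
        · subst h0; simpa using ⟨hTne, hTc⟩
        · simp only [if_neg h0]
          exact hAinv (i - 1) (by omega)
      · intro i hi
        by_cases h0 : i = 0
        · subst h0
          simp only [if_pos rfl, if_neg (by omega : (1:ℕ) ≠ 0)]
          have : A' (1 - 1) = insert b T := by simpa using hA0
          rw [this]
          exact addstep_insert haT hadj
        · simp only [if_neg h0, if_neg (by omega : i + 1 ≠ 0)]
          have : i + 1 - 1 = (i - 1) + 1 := by omega
          rw [this]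
          exact hAstep (i - 1) (by omega)

lemma addchain {B : Finset (ℤ × ℤ)} (hB : B.Nonempty) (hcB : ShapeConnected B) :
    ∃ A : ℕ → Finset (ℤ × ℤ), (∃ p : ℤ × ℤ, A 0 = {p}) ∧ A (B.card - 1) = B ∧
      (∀ i ≤ B.card - 1, (A i).Nonempty ∧ ShapeConnected (A i)) ∧
      (∀ i < B.card - 1, AddStep (A i) (A (i + 1))) := by
  obtain ⟨p, hp⟩ := hB
  have hsub : ({p} : Finset (ℤ × ℤ)) ⊆ B := Finset.singleton_subset_iff.2 hp
  obtain ⟨A, h0, hk, hinv, hstep⟩ := addchain_aux hcB (B.card - 1) {p} hsub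
    (Finset.singleton_nonempty p) (singleton_connected p)
    (by simp [Finset.card_singleton])
  exact ⟨A, ⟨p, h0⟩, hk, hinv, hstep⟩

end SB
/-- any connected shape `S_F` can be built (up to translation) from a
singleton within `4|B(S_F)| + 2⌈log₂ n⌉` steps, each either a node-addition step or
an RC doubling step, through connected shapes. -/
theorem baseline_then_RC_constructor (S_F : Finset (ℤ × ℤ)) (hF : S_F.Nonempty)
    (hcF : ShapeConnected S_F) :
    ∃ m ≤ 4 * (Baseline S_F).card + 2 * Nat.clog 2 S_F.card,
      ∃ T : ℕ → Finset (ℤ × ℤ),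
        (∃ a b : ℤ, T 0 = {(a, b)}) ∧
        (∃ v : ℤ × ℤ, T m = translateSh v S_F) ∧
        (∀ i ≤ m, (T i).Nonempty ∧ ShapeConnected (T i)) ∧
        (∀ i < m, AddStep (T i) (T (i + 1)) ∨ RCStep (T i) (T (i + 1))) := by
  classical
  set c : ℤ := -ymin S_F with hc
  set S'' : Finset (ℤ × ℤ) := translateSh (0, c) S_F with hS''
  have hS''ne : S''.Nonempty := SB.translate_nonempty hF
  have hS''c : ShapeConnected S'' := SB.translate_connected hcF
  have hymin0 : ymin S'' = 0 := by
    rw [hS'', SB.ymin_translate_y hF]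
    omega
  have hBase : Baseline S'' = Baseline S_F := SB.Baseline_translate_y hF
  have hcard'' : S''.card = S_F.card := SB.card_translateSh _ _
  -- Phase 3 : east chain for S''
  obtain ⟨k3, hk3, A3, hA30, hA3k, hA3inv, hA3step⟩ := SB.main_east S'' hS''ne hS''c
  rw [hcard''] at hk3
  -- Phase 2 : north chain via swap
  set V2 : Finset (ℤ × ℤ) := SB.swapSh (KC S'') with hV2
  have hV2ne : V2.Nonempty := SB.swapSh_nonempty (SB.KC_nonempty hS''ne)
  have hV2c : ShapeConnected V2 := SB.shapeConnected_swap (SB.KC_connected hS''c)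
  obtain ⟨k2, hk2, A2, hA20, hA2k, hA2inv, hA2step⟩ := SB.main_east V2 hV2ne hV2c
  have hk2' : k2 ≤ Nat.clog 2 S_F.card := by
    refine le_trans hk2 (Nat.clog_mono_right _ ?_)
    calc V2.card ≤ (KC S'').card := Finset.card_image_le
    _ ≤ S''.card := SB.KC_card_le _
    _ = S_F.card := hcard''
  set B2 : ℕ → Finset (ℤ × ℤ) := fun t => SB.swapSh (A2 t) with hB2
  have hB20 : B2 0 = Baseline S'' := by
    rw [hB2]
    simp only
    rw [hA20]
    unfold Baseline
    rw [SB.KR_eq_swap]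
  have hxminV2 : xmin V2 = 0 := by
    rw [hV2, SB.xmin_swap, SB.ymin_KC, hymin0]
  have hB2k : B2 k2 = KC S'' := by
    rw [hB2]
    simp only
    rw [hA2k, hxminV2]
    rw [show ((-(0:ℤ), (0:ℤ)) : ℤ × ℤ) = ((0:ℤ), (0:ℤ)) from by norm_num]
    rw [SB.translate_zero, hV2, SB.swapSh_swapSh]
  -- Phase 1 : build the baseline by node additions
  set Bl : Finset (ℤ × ℤ) := Baseline S'' with hBl
  have hBlswap : Bl = SB.swapSh (KC (SB.swapSh (KC S''))) := by
    rw [hBl]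
    unfold Baseline
    rw [SB.KR_eq_swap]
  have hBlne : Bl.Nonempty := by
    rw [hBlswap]
    exact SB.swapSh_nonempty (SB.KC_nonempty (SB.swapSh_nonempty (SB.KC_nonempty hS''ne)))
  have hBlc : ShapeConnected Bl := by
    rw [hBlswap]
    exact SB.shapeConnected_swap (SB.KC_connected (SB.shapeConnected_swap
      (SB.KC_connected hS''c)))
  obtain ⟨A1, ⟨p, hA10⟩, hA1k, hA1inv, hA1step⟩ := SB.addchain hBlne hBlc
  set k1 : ℕ := Bl.card - 1 with hk1
  -- the combined chain
  set m : ℕ := k1 + k2 + k3 with hm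
  set Tf : ℕ → Finset (ℤ × ℤ) := fun i =>
    if i ≤ k1 then A1 i else if i ≤ k1 + k2 then B2 (i - k1) else A3 (i - k1 - k2) with hTf
  have hTfval1 : ∀ i, i ≤ k1 → Tf i = A1 i := by
    intro i hi
    rw [hTf]
    simp only [if_pos hi]
  have hTfval2 : ∀ i, k1 < i → i ≤ k1 + k2 → Tf i = B2 (i - k1) := by
    intro i h1 h2
    rw [hTf]
    simp only [if_neg (by omega : ¬ i ≤ k1), if_pos h2]
  have hTfval3 : ∀ i, k1 + k2 < i → Tf i = A3 (i - k1 - k2) := by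
    intro i h1
    rw [hTf]
    simp only [if_neg (by omega : ¬ i ≤ k1), if_neg (by omega : ¬ i ≤ k1 + k2)]
  -- boundary equalities
  have hbd1 : A1 k1 = B2 0 := by rw [hA1k, hB20]
  have hbd2 : B2 k2 = A3 0 := by rw [hB2k, hA30]
  -- generalized value lemmas across boundaries
  have hTv2 : ∀ i, k1 ≤ i → i ≤ k1 + k2 → Tf i = B2 (i - k1) := by
    intro i h1 h2
    rcases Nat.eq_or_lt_of_le h1 with h | h
    · rw [hTfval1 i (by omega), ← h, Nat.sub_self, ← hbd1]
    · exact hTfval2 i h h2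
  have hTv3 : ∀ i, k1 + k2 ≤ i → Tf i = A3 (i - k1 - k2) := by
    intro i h1
    rcases Nat.eq_or_lt_of_le h1 with h | h
    · rw [hTv2 i (by omega) (by omega), ← h]
      rw [show k1 + k2 - k1 - k2 = 0 from by omega, show k1 + k2 - k1 = k2 from by omega, hbd2]
    · exact hTfval3 i h
  refine ⟨m, ?_, Tf, ?_, ?_, ?_, ?_⟩
  · -- the bound
    have hBlcard : Bl.card = (Baseline S_F).card := by rw [hBase]
    rw [hm, hk1, hBlcard]
    omega
  · -- start
    refine ⟨p.1, p.2, ?_⟩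
    rw [hTfval1 0 (by omega), hA10]
  · -- end
    refine ⟨(0 + -xmin S'', c + 0), ?_⟩
    rw [hTv3 m (by omega)]
    rw [show m - k1 - k2 = k3 from by omega]
    rw [hA3k, hS'']
    rw [SB.translate_translate]
  · -- invariants
    intro i hi
    by_cases h1 : i ≤ k1
    · rw [hTfval1 i h1]; exact hA1inv i h1
    · by_cases h2 : i ≤ k1 + k2
      · rw [hTfval2 i (by omega) h2]
        obtain ⟨hne, hcon⟩ := hA2inv (i - k1)
        exact ⟨SB.swapSh_nonempty hne, SB.shapeConnected_swap hcon⟩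
      · rw [hTfval3 i (by omega)]
        exact hA3inv _
  · -- steps
    intro i hi
    by_cases h1 : i + 1 ≤ k1
    · left
      rw [hTfval1 i (by omega), hTfval1 (i+1) h1]
      exact hA1step i (by omega)
    · by_cases h2 : i + 1 ≤ k1 + k2
      · right
        rw [hTv2 i (by omega) (by omega), hTv2 (i+1) (by omega) h2]
        obtain ⟨D, hadm, heq⟩ := hA2step (i - k1) (by omega)
        refine ⟨D, Or.inr ⟨SB.northAdmissible_swap hadm, ?_⟩⟩
        rw [show i + 1 - k1 = (i - k1) + 1 from by omega]
        rw [hB2]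
        simp only
        rw [heq]
        exact (SB.RCN_swap _ _).symm
      · right
        rw [hTv3 i (by omega), hTv3 (i+1) (by omega)]
        obtain ⟨D, hadm, heq⟩ := hA3step (i - k1 - k2) (by omega)
        refine ⟨D, Or.inl ⟨hadm, ?_⟩⟩
        rw [show i + 1 - k1 - k2 = (i - k1 - k2) + 1 from by omega]
        exact heq
end

section
/- RC doubling preserves connectivity: if S is a connected shape and D is an admissible nonempty doubled set, then RC_E(S,D) is connected; likewise RC_N(S,D) is connected. -/
section RCconnAux

open Relation

lemma wD_succ' (D : Finset ℤ) (x : ℤ) :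
    wD D (x + 1) = wD D x + (if x ∈ D then 1 else 0) := by
  classical
  unfold wD
  have h : D.filter (· < x + 1) = D.filter (· < x) ∪ D.filter (· = x) := by
    ext a
    by_cases ha : a ∈ D <;> simp [Finset.mem_filter, Finset.mem_union, ha] <;> omega
  rw [h, Finset.card_union_of_disjoint, Finset.filter_eq']
  · split <;> simp
  · simp only [Finset.disjoint_left, Finset.mem_filter]
    rintro a ⟨-, h1⟩ ⟨-, h2⟩; omega

lemma adj_symm : ∀ {a b : ℤ × ℤ}, Adj a b → Adj b a := by
  intro a b h; unfold Adj at *; omega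

lemma rce_conn (S : Finset (ℤ × ℤ)) (hconn : ShapeConnected S) (D : Finset ℤ) :
    ShapeConnected (RCE S D) := by
  classical
  set T := RCE S D with hT
  set rel : ℤ × ℤ → ℤ × ℤ → Prop := fun a b => a ∈ T ∧ b ∈ T ∧ Adj a b with hrel
  have relsymm : Symmetric rel := by
    rintro a b ⟨h1, h2, h3⟩; exact ⟨h2, h1, adj_symm h3⟩
  have rtsymm : Symmetric (ReflTransGen rel) := by
    haveI : Std.Symm rel := ⟨fun _ _ h => relsymm h⟩
    exact fun _ _ h => Relation.ReflTransGen.symmetric.symm _ _ h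
  set f : ℤ × ℤ → ℤ × ℤ := fun p => (p.1 + (wD D p.1 : ℤ), p.2) with hfdef
  have hfmem : ∀ p ∈ S, f p ∈ T := by
    intro p hp
    simp only [hT, RCE, Finset.mem_union, Finset.mem_image]
    exact Or.inl ⟨p, hp, rfl⟩
  have hgmem : ∀ p ∈ S, p.1 ∈ D → (p.1 + (wD D p.1 : ℤ) + 1, p.2) ∈ T := by
    intro p hp hd
    simp only [hT, RCE, Finset.mem_union, Finset.mem_image, Finset.mem_filter]
    exact Or.inr ⟨p, ⟨hp, hd⟩, rfl⟩
  -- one step for adjacent pairs with q east of p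
  have stepE : ∀ p q : ℤ × ℤ, p ∈ S → q ∈ S → q.1 = p.1 + 1 → q.2 = p.2 →
      ReflTransGen rel (f p) (f q) := by
    intro p q hp hq h1 h2
    have hw := wD_succ' D p.1
    by_cases hd : p.1 ∈ D
    · have m1 : (p.1 + (wD D p.1 : ℤ) + 1, p.2) ∈ T := hgmem p hp hd
      have e1 : rel (f p) (p.1 + (wD D p.1 : ℤ) + 1, p.2) := by
        refine ⟨hfmem p hp, m1, ?_⟩
        simp only [hfdef, Adj]; omega
      have e2 : rel (p.1 + (wD D p.1 : ℤ) + 1, p.2) (f q) := by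
        refine ⟨m1, hfmem q hq, ?_⟩
        simp only [hfdef, Adj, h1, h2, hw, if_pos hd]
        push_cast; omega
      exact (ReflTransGen.single e1).tail e2
    · refine ReflTransGen.single ⟨hfmem p hp, hfmem q hq, ?_⟩
      simp only [hfdef, Adj, h1, h2, hw, if_neg hd]
      push_cast; omega
  have step : ∀ p q : ℤ × ℤ, p ∈ S → q ∈ S → Adj p q → ReflTransGen rel (f p) (f q) := by
    intro p q hp hq hadj
    unfold Adj at hadj
    rcases (by omega :
        (p.1 = q.1 ∧ (p.2 - q.2).natAbs = 1) ∨ (q.1 = p.1 + 1 ∧ q.2 = p.2) ∨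
        (p.1 = q.1 + 1 ∧ p.2 = q.2)) with ⟨h1, h2⟩ | ⟨h1, h2⟩ | ⟨h1, h2⟩
    · refine ReflTransGen.single ⟨hfmem p hp, hfmem q hq, ?_⟩
      simp only [hfdef, Adj, h1]; omega
    · exact stepE p q hp hq h1 h2
    · exact rtsymm (stepE q p hq hp h1 h2)
  have lift : ∀ u v : ℤ × ℤ,
      ReflTransGen (fun a b => a ∈ S ∧ b ∈ S ∧ Adj a b) u v →
      ReflTransGen rel (f u) (f v) := by
    intro u v h
    induction h with
    | refl => exact ReflTransGen.refl
    | tail _ hbc ih => exact ih.trans (step _ _ hbc.1 hbc.2.1 hbc.2.2)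
  -- every point of T reaches f of some point of S
  have decomp : ∀ a ∈ T, ∃ p ∈ S, ReflTransGen rel a (f p) := by
    intro a ha
    have := ha
    simp only [hT, RCE, Finset.mem_union, Finset.mem_image, Finset.mem_filter] at this
    rcases this with ⟨p, hp, hpe⟩ | ⟨p, ⟨hp, hd⟩, hpe⟩
    · subst hpe; exact ⟨p, hp, ReflTransGen.refl⟩
    · subst hpe
      exact ⟨p, hp, ReflTransGen.single ⟨ha, hfmem p hp, by simp only [hfdef, Adj]; omega⟩⟩
  intro u hu v hv
  obtain ⟨p, hp, hup⟩ := decomp u hu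
  obtain ⟨q, hq, hvq⟩ := decomp v hv
  exact (hup.trans (lift p q (hconn p hp q hq))).trans (rtsymm hvq)

lemma rcn_conn (S : Finset (ℤ × ℤ)) (hconn : ShapeConnected S) (D : Finset ℤ) :
    ShapeConnected (RCN S D) := by
  classical
  set T := RCN S D with hT
  set rel : ℤ × ℤ → ℤ × ℤ → Prop := fun a b => a ∈ T ∧ b ∈ T ∧ Adj a b with hrel
  have relsymm : Symmetric rel := by
    rintro a b ⟨h1, h2, h3⟩; exact ⟨h2, h1, adj_symm h3⟩
  have rtsymm : Symmetric (ReflTransGen rel) := by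
    haveI : Std.Symm rel := ⟨fun _ _ h => relsymm h⟩
    exact fun _ _ h => Relation.ReflTransGen.symmetric.symm _ _ h
  set f : ℤ × ℤ → ℤ × ℤ := fun p => (p.1, p.2 + (wD D p.2 : ℤ)) with hfdef
  have hfmem : ∀ p ∈ S, f p ∈ T := by
    intro p hp
    simp only [hT, RCN, Finset.mem_union, Finset.mem_image]
    exact Or.inl ⟨p, hp, rfl⟩
  have hgmem : ∀ p ∈ S, p.2 ∈ D → (p.1, p.2 + (wD D p.2 : ℤ) + 1) ∈ T := by
    intro p hp hd
    simp only [hT, RCN, Finset.mem_union, Finset.mem_image, Finset.mem_filter]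
    exact Or.inr ⟨p, ⟨hp, hd⟩, rfl⟩
  have stepN : ∀ p q : ℤ × ℤ, p ∈ S → q ∈ S → q.2 = p.2 + 1 → q.1 = p.1 →
      ReflTransGen rel (f p) (f q) := by
    intro p q hp hq h1 h2
    have hw := wD_succ' D p.2
    by_cases hd : p.2 ∈ D
    · have m1 : (p.1, p.2 + (wD D p.2 : ℤ) + 1) ∈ T := hgmem p hp hd
      have e1 : rel (f p) (p.1, p.2 + (wD D p.2 : ℤ) + 1) := by
        refine ⟨hfmem p hp, m1, ?_⟩
        simp only [hfdef, Adj]; omega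
      have e2 : rel (p.1, p.2 + (wD D p.2 : ℤ) + 1) (f q) := by
        refine ⟨m1, hfmem q hq, ?_⟩
        simp only [hfdef, Adj, h1, h2, hw, if_pos hd]
        push_cast; omega
      exact (ReflTransGen.single e1).tail e2
    · refine ReflTransGen.single ⟨hfmem p hp, hfmem q hq, ?_⟩
      simp only [hfdef, Adj, h1, h2, hw, if_neg hd]
      push_cast; omega
  have step : ∀ p q : ℤ × ℤ, p ∈ S → q ∈ S → Adj p q → ReflTransGen rel (f p) (f q) := by
    intro p q hp hq hadj
    unfold Adj at hadj
    rcases (by omega :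
        (p.2 = q.2 ∧ (p.1 - q.1).natAbs = 1) ∨ (q.2 = p.2 + 1 ∧ q.1 = p.1) ∨
        (p.2 = q.2 + 1 ∧ p.1 = q.1)) with ⟨h1, h2⟩ | ⟨h1, h2⟩ | ⟨h1, h2⟩
    · refine ReflTransGen.single ⟨hfmem p hp, hfmem q hq, ?_⟩
      simp only [hfdef, Adj, h1]; omega
    · exact stepN p q hp hq h1 h2
    · exact rtsymm (stepN q p hq hp h1 h2)
  have lift : ∀ u v : ℤ × ℤ,
      ReflTransGen (fun a b => a ∈ S ∧ b ∈ S ∧ Adj a b) u v →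
      ReflTransGen rel (f u) (f v) := by
    intro u v h
    induction h with
    | refl => exact ReflTransGen.refl
    | tail _ hbc ih => exact ih.trans (step _ _ hbc.1 hbc.2.1 hbc.2.2)
  have decomp : ∀ a ∈ T, ∃ p ∈ S, ReflTransGen rel a (f p) := by
    intro a ha
    have := ha
    simp only [hT, RCN, Finset.mem_union, Finset.mem_image, Finset.mem_filter] at this
    rcases this with ⟨p, hp, hpe⟩ | ⟨p, ⟨hp, hd⟩, hpe⟩
    · subst hpe; exact ⟨p, hp, ReflTransGen.refl⟩
    · subst hpe
      exact ⟨p, hp, ReflTransGen.single ⟨ha, hfmem p hp, by simp only [hfdef, Adj]; omega⟩⟩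
  intro u hu v hv
  obtain ⟨p, hp, hup⟩ := decomp u hu
  obtain ⟨q, hq, hvq⟩ := decomp v hv
  exact (hup.trans (lift p q (hconn p hp q hq))).trans (rtsymm hvq)

end RCconnAux

/-- RC doubling preserves connectivity. -/
theorem RC_preserves_connectivity (S : Finset (ℤ × ℤ)) (hS : S.Nonempty)
    (hconn : ShapeConnected S) (D : Finset ℤ) :
    (eastAdmissible S D → ShapeConnected (RCE S D)) ∧
      (northAdmissible S D → ShapeConnected (RCN S D)) := by
  exact ⟨fun _ => rce_conn S hconn D, fun _ => rcn_conn S hconn D⟩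
end
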